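/- arXiv:1008.4533 — 6 statements merged into one kernel-verified Lean document; each statement's English description precedes it below -/
import Mathlib

section
/- If B ⊆ F_{n,d} is a blender, then its dual cone B* = {q ∈ F_{n,d} : [p,q] ≥ 0 for all p ∈ B} is also a blender. -/
open MvPolynomial Filter

/-- Composition of a form with a matrix: `(p ∘ M)(x) = p (M x)`. -/
noncomputable def compMat {n : ℕ} (p : MvPolynomial (Fin n) ℝ)
    (M : Matrix (Fin n) (Fin n) ℝ) : MvPolynomial (Fin n) ℝ :=
  aeval (fun j => ∑ k, MvPolynomial.C (M j k) * X k) p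

/-- Coefficientwise convergence of a sequence of polynomials. -/
def CoeffTendsto {n : ℕ} (f : ℕ → MvPolynomial (Fin n) ℝ)
    (q : MvPolynomial (Fin n) ℝ) : Prop :=
  ∀ i : Fin n →₀ ℕ, Tendsto (fun m => (f m).coeff i) atTop (nhds (q.coeff i))

/-- A blender: a closed convex cone of degree-`d` forms closed under linear changes of variables. -/
def IsBlender (n d : ℕ) (B : Set (MvPolynomial (Fin n) ℝ)) : Prop :=
  (∀ p ∈ B, p.IsHomogeneous d) ∧
  (0 ∈ B) ∧
  (∀ p ∈ B, ∀ q ∈ B, p + q ∈ B) ∧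
  (∀ (f : ℕ → MvPolynomial (Fin n) ℝ) (q : MvPolynomial (Fin n) ℝ),
      (∀ m, f m ∈ B) → CoeffTendsto f q → q ∈ B) ∧
  (∀ p ∈ B, ∀ M : Matrix (Fin n) (Fin n) ℝ, compMat p M ∈ B)

/-- The inner product `[p,q] = Σ_i c(i) a(p;i) a(q;i)`, where the coefficient of `x^i`
is `c(i) a(p;i)` and `c(i)` is the multinomial coefficient. -/
noncomputable def formInner {n : ℕ} (p q : MvPolynomial (Fin n) ℝ) : ℝ :=
  ∑ i ∈ p.support ∪ q.support,
    p.coeff i * q.coeff i / (Nat.multinomial Finset.univ (fun j => i j) : ℝ)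

/-- The cone of psd forms of degree `d`. -/
def Psd (n d : ℕ) : Set (MvPolynomial (Fin n) ℝ) :=
  {p | p.IsHomogeneous d ∧ ∀ u : Fin n → ℝ, 0 ≤ eval u p}

/-- The linear form with coefficients `a`. -/
noncomputable def linForm {n : ℕ} (a : Fin n → ℝ) : MvPolynomial (Fin n) ℝ :=
  ∑ j, MvPolynomial.C (a j) * X j

/-- The cone `Q_{n,d}` of sums of `d`-th powers of real linear forms. -/
def SumPow (n d : ℕ) : Set (MvPolynomial (Fin n) ℝ) :=
  {p | ∃ (s : ℕ) (a : Fin s → Fin n → ℝ), p = ∑ k, (linForm (a k)) ^ d}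

/-- The dual cone of `B` inside `F_{n,d}` with respect to the inner product `[·,·]`. -/
def dualCone (n d : ℕ) (B : Set (MvPolynomial (Fin n) ℝ)) : Set (MvPolynomial (Fin n) ℝ) :=
  {q | q.IsHomogeneous d ∧ ∀ p ∈ B, 0 ≤ formInner p q}

namespace BlenderAux
variable {n : ℕ}

noncomputable def mc {n : ℕ} (i : Fin n →₀ ℕ) : ℝ :=
  (Nat.multinomial Finset.univ (fun j => i j) : ℝ)

lemma mc_pos (i : Fin n →₀ ℕ) : 0 < mc i := by
  unfold mc; exact_mod_cast Nat.multinomial_pos _ _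

lemma formInner_eq_sum {p q : MvPolynomial (Fin n) ℝ} {S : Finset (Fin n →₀ ℕ)}
    (hp : p.support ⊆ S) (hq : q.support ⊆ S) :
    formInner p q = ∑ i ∈ S, p.coeff i * q.coeff i / mc i := by
  rw [formInner]
  refine Finset.sum_subset (Finset.union_subset hp hq) ?_
  intro i _ hi
  simp only [Finset.mem_union, MvPolynomial.mem_support_iff, not_or, not_not] at hi
  simp [hi.1]

lemma formInner_comm (p q : MvPolynomial (Fin n) ℝ) : formInner p q = formInner q p := by
  rw [formInner, formInner, Finset.union_comm]
  exact Finset.sum_congr rfl fun i _ => by ring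

lemma formInner_zero_left (q : MvPolynomial (Fin n) ℝ) : formInner 0 q = 0 := by
  rw [formInner_eq_sum (p := 0) (by simp) (subset_refl q.support)]
  simp

lemma formInner_add_left (p₁ p₂ q : MvPolynomial (Fin n) ℝ) :
    formInner (p₁ + p₂) q = formInner p₁ q + formInner p₂ q := by
  set S := (p₁.support ∪ p₂.support) ∪ q.support with hS
  have hq : q.support ⊆ S := Finset.subset_union_right
  have h1 : formInner (p₁ + p₂) q = ∑ i ∈ S, (p₁ + p₂).coeff i * q.coeff i / mc i :=
    formInner_eq_sum ((MvPolynomial.support_add (p := p₁) (q := p₂)).trans Finset.subset_union_left) hq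
  have h2 : formInner p₁ q = ∑ i ∈ S, p₁.coeff i * q.coeff i / mc i :=
    formInner_eq_sum (Finset.subset_union_left.trans Finset.subset_union_left) hq
  have h3 : formInner p₂ q = ∑ i ∈ S, p₂.coeff i * q.coeff i / mc i :=
    formInner_eq_sum (Finset.subset_union_right.trans Finset.subset_union_left) hq
  rw [h1, h2, h3, ← Finset.sum_add_distrib]
  exact Finset.sum_congr rfl fun i _ => by rw [MvPolynomial.coeff_add]; ring

lemma formInner_smul_left (c : ℝ) (p q : MvPolynomial (Fin n) ℝ) :
    formInner (c • p) q = c * formInner p q := by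
  have h1 : formInner (c • p) q =
      ∑ i ∈ p.support ∪ q.support, (c • p).coeff i * q.coeff i / mc i :=
    formInner_eq_sum (subset_trans (MvPolynomial.support_smul) Finset.subset_union_left)
      Finset.subset_union_right
  rw [h1, formInner, Finset.mul_sum]
  refine Finset.sum_congr rfl fun i _ => by rw [MvPolynomial.coeff_smul, mc]; simp; ring

lemma formInner_eq_sum_left (p q : MvPolynomial (Fin n) ℝ) :
    formInner p q = ∑ i ∈ p.support, p.coeff i * q.coeff i / mc i := by
  rw [formInner]
  refine (Finset.sum_subset Finset.subset_union_left ?_).symm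
  intro i _ hi
  simp only [MvPolynomial.mem_support_iff, not_not] at hi
  simp [hi]


/-- Forward difference operator. -/
noncomputable def fd (f : ℕ → ℝ) : ℕ → ℝ := fun k => f (k + 1) - f k

/-- power function -/
noncomputable def pw (v : ℕ) : ℕ → ℝ := fun k => (k : ℝ) ^ v

lemma fd_sum {α : Type*} (s : Finset α) (g : α → ℕ → ℝ) :
    fd (fun k => ∑ j ∈ s, g j k) = fun k => ∑ j ∈ s, fd (g j) k := by
  funext k; simp [fd, Finset.sum_sub_distrib]

lemma fd_iter_sum {α : Type*} (m : ℕ) (s : Finset α) (g : α → ℕ → ℝ) :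
    fd^[m] (fun k => ∑ j ∈ s, g j k) = fun k => ∑ j ∈ s, fd^[m] (g j) k := by
  induction m generalizing g with
  | zero => simp
  | succ m ih =>
      rw [Function.iterate_succ_apply, fd_sum, ih]
      funext k
      exact Finset.sum_congr rfl fun j _ => by rw [Function.iterate_succ_apply]

lemma fd_smul (c : ℝ) (f : ℕ → ℝ) : fd (fun k => c * f k) = fun k => c * fd f k := by
  funext k; simp [fd]; ring

lemma fd_iter_smul (m : ℕ) (c : ℝ) (f : ℕ → ℝ) :
    fd^[m] (fun k => c * f k) = fun k => c * fd^[m] f k := by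
  induction m generalizing f with
  | zero => simp
  | succ m ih =>
      rw [Function.iterate_succ_apply, fd_smul, ih]
      funext k
      rw [Function.iterate_succ_apply]

lemma fd_pw (v : ℕ) : fd (pw v) = fun k => ∑ j ∈ Finset.range v, (v.choose j : ℝ) * pw j k := by
  funext k
  simp only [fd, pw]
  push_cast
  rw [add_pow, Finset.sum_range_succ]
  simp only [Nat.choose_self, Nat.cast_one, mul_one, Nat.sub_self, pow_zero]
  have h : ∀ j ∈ Finset.range v, (k:ℝ)^j * (1:ℝ)^(v-j) * (v.choose j : ℝ)
      = (v.choose j : ℝ) * (k:ℝ)^j := fun j _ => by ring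
  rw [Finset.sum_congr rfl h]
  ring

lemma fd_iter_pw_of_lt (v : ℕ) : ∀ m, v < m → fd^[m] (pw v) = 0 := by
  induction v using Nat.strong_induction_on with
  | _ v ih =>
    intro m hm
    obtain ⟨m', rfl⟩ : ∃ m', m = m' + 1 := ⟨m - 1, by omega⟩
    rw [Function.iterate_succ_apply, fd_pw, fd_iter_sum]
    funext k
    show ∑ j ∈ Finset.range v, fd^[m'] (fun k => (v.choose j : ℝ) * pw j k) k = 0
    refine Finset.sum_eq_zero fun j hj => ?_
    have hjv := Finset.mem_range.1 hj
    rw [fd_iter_smul, ih j hjv m' (by omega)]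
    simp

lemma fd_iter_pw_self (m : ℕ) : fd^[m] (pw m) 0 = m.factorial := by
  induction m with
  | zero => simp [pw]
  | succ m ih =>
      rw [Function.iterate_succ_apply, fd_pw, fd_iter_sum]
      show ∑ j ∈ Finset.range (m+1), fd^[m] (fun k => ((m+1).choose j : ℝ) * pw j k) 0
          = ((m+1).factorial : ℝ)
      rw [Finset.sum_range_succ]
      have h0 : ∀ j ∈ Finset.range m, fd^[m] (fun x => ((m+1).choose j : ℝ) * pw j x) 0 = 0 := by
        intro j hj
        rw [fd_iter_smul, fd_iter_pw_of_lt j m (Finset.mem_range.1 hj)]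
        simp
      rw [Finset.sum_eq_zero h0, zero_add, fd_iter_smul]
      show ((m+1).choose m : ℝ) * fd^[m] (pw m) 0 = _
      rw [ih, Nat.choose_succ_self_right, Nat.factorial_succ]
      push_cast
      ring

/-- The alternating sum `A m f = ∑ (-1)^k C(m,k) f k`. -/
noncomputable def altSum (m : ℕ) (f : ℕ → ℝ) : ℝ :=
  ∑ k ∈ Finset.range (m + 1), (-1 : ℝ) ^ k * (m.choose k : ℝ) * f k

lemma altSum_succ (m : ℕ) (f : ℕ → ℝ) :
    altSum (m + 1) f = altSum m f - altSum m (fun k => f (k + 1)) := by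
  set T1 := ∑ k ∈ Finset.range (m+1), (-1:ℝ)^k * (m.choose k : ℝ) * f (k+1) with hT1
  set T2 := ∑ k ∈ Finset.range (m+1), (-1:ℝ)^k * (m.choose (k+1) : ℝ) * f (k+1) with hT2
  have e1 : altSum (m+1) f = -T1 - T2 + f 0 := by
    rw [altSum, Finset.sum_range_succ' _ (m+1)]
    have h1 : ∀ k ∈ Finset.range (m+1), (-1 : ℝ)^(k+1) * ((m+1).choose (k+1) : ℝ) * f (k+1)
        = -((-1:ℝ)^k * (m.choose k : ℝ) * f (k+1))
          + -((-1:ℝ)^k * (m.choose (k+1) : ℝ) * f (k+1)) := by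
      intro k _
      rw [Nat.choose_succ_succ]
      push_cast; ring
    rw [Finset.sum_congr rfl h1, Finset.sum_add_distrib, Finset.sum_neg_distrib,
      Finset.sum_neg_distrib]
    simp only [pow_zero, Nat.choose_zero_right, Nat.cast_one, one_mul]
    ring
  have e2 : altSum m f = -T2 + f 0 := by
    rw [altSum, Finset.sum_range_succ' _ m, hT2, Finset.sum_range_succ, Nat.choose_succ_self]
    have h : ∀ k ∈ Finset.range m, (-1:ℝ)^(k+1) * (m.choose (k+1):ℝ) * f (k+1)
        = -((-1:ℝ)^k * (m.choose (k+1):ℝ) * f (k+1)) := fun k _ => by ring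
    rw [Finset.sum_congr rfl h, Finset.sum_neg_distrib]
    simp only [pow_zero, Nat.choose_zero_right, Nat.cast_one, one_mul, Nat.cast_zero,
      mul_zero, zero_mul, add_zero]
  have e3 : altSum m (fun k => f (k + 1)) = T1 := rfl
  rw [e1, e2, e3]
  ring

lemma fd_iter_eq_altSum (m : ℕ) (f : ℕ → ℝ) :
    fd^[m] f 0 = (-1 : ℝ) ^ m * altSum m f := by
  induction m generalizing f with
  | zero => simp [altSum]
  | succ m ih =>
      rw [Function.iterate_succ_apply, ih]
      have : altSum m (fd f) = altSum m (fun k => f (k+1)) - altSum m f := by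
        rw [altSum]
        show _ = altSum m (fun k => f (k+1)) - altSum m f
        rw [altSum, altSum, ← Finset.sum_sub_distrib]
        exact Finset.sum_congr rfl fun k _ => by rw [fd]; ring
      rw [this, altSum_succ]
      ring

/-- Key alternating sum identity, vanishing case. -/
lemma altSum_pw_eq_zero {v m : ℕ} (h : v < m) : altSum m (pw v) = 0 := by
  have := fd_iter_eq_altSum m (pw v)
  rw [fd_iter_pw_of_lt v m h] at this
  simp only [Pi.zero_apply] at this
  have h2 : (-1:ℝ)^m ≠ 0 := by positivity
  field_simp at this
  exact (mul_eq_zero.1 this.symm).resolve_left h2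

/-- Key alternating sum identity, diagonal case. -/
lemma altSum_pw_self (m : ℕ) : altSum m (pw m) = (-1:ℝ)^m * m.factorial := by
  have := fd_iter_eq_altSum m (pw m)
  rw [fd_iter_pw_self] at this
  have h2 : ((-1:ℝ)^m) * ((-1:ℝ)^m) = 1 := by
    rw [← pow_add]
    exact Even.neg_one_pow ⟨m, rfl⟩
  rw [this, ← mul_assoc, h2, one_mul]


lemma prod_pow_eq_monomial (a : Fin n → ℝ) (g : Fin n → ℕ) :
    ∏ j, (MvPolynomial.C (a j) * X j) ^ (g j)
      = monomial (Finsupp.equivFunOnFinite.symm g) (∏ j, a j ^ g j) := by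
  have h1 : ∀ j ∈ Finset.univ, (MvPolynomial.C (a j) * X j) ^ (g j)
      = MvPolynomial.C (a j ^ g j) * (X j ^ g j : MvPolynomial (Fin n) ℝ) := by
    intro j _; rw [mul_pow, map_pow]
  rw [Finset.prod_congr rfl h1, Finset.prod_mul_distrib, ← map_prod]
  set s := Finsupp.equivFunOnFinite.symm g with hs
  have h2 : ∀ j, g j = s j := fun j => rfl
  have h3 : (∏ j, (X j : MvPolynomial (Fin n) ℝ) ^ g j) = ∏ j ∈ s.support, X j ^ s j := by
    rw [Finset.prod_subset (Finset.subset_univ s.support)]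
    · exact Finset.prod_congr rfl fun j _ => by rw [h2]
    · intro j _ hj
      rw [Finsupp.notMem_support_iff.1 hj, pow_zero]
  rw [h3, MvPolynomial.prod_X_pow_eq_monomial, MvPolynomial.C_mul_monomial, mul_one]

lemma coeff_linForm_pow (a : Fin n → ℝ) (d : ℕ) (i : Fin n →₀ ℕ) :
    MvPolynomial.coeff i (linForm a ^ d) =
      if (∑ j, i j) = d then
        (Nat.multinomial Finset.univ (fun j => i j) : ℝ) * ∏ j, a j ^ i j
      else 0 := by
  rw [linForm, Finset.sum_pow_eq_sum_piAntidiag, MvPolynomial.coeff_sum]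
  have h1 : ∀ k : Fin n → ℕ,
      MvPolynomial.coeff i ((Nat.multinomial Finset.univ k : MvPolynomial (Fin n) ℝ)
        * ∏ j, (MvPolynomial.C (a j) * X j) ^ (k j))
      = if Finsupp.equivFunOnFinite.symm k = i
          then (Nat.multinomial Finset.univ k : ℝ) * ∏ j, a j ^ k j else 0 := by
    intro k
    rw [prod_pow_eq_monomial, ← MvPolynomial.C_eq_coe_nat, MvPolynomial.C_mul_monomial,
      MvPolynomial.coeff_monomial]
  rw [Finset.sum_congr rfl fun k _ => h1 k]
  have hcoe : ∀ k : Fin n → ℕ, Finsupp.equivFunOnFinite.symm k = i → k = ⇑i := by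
    intro k hk
    rw [← hk]
    rfl
  by_cases hd : (∑ j, i j) = d
  · rw [if_pos hd, Finset.sum_eq_single (⇑i : Fin n → ℕ)]
    · rw [if_pos (Finsupp.equivFunOnFinite_symm_coe i)]
    · intro k _ hki
      rw [if_neg fun h => hki (hcoe k h)]
    · intro hmem
      exact absurd (Finset.mem_piAntidiag.2 ⟨hd, fun _ _ => Finset.mem_univ _⟩) hmem
  · rw [if_neg hd]
    refine Finset.sum_eq_zero fun k hk => ?_
    rw [Finset.mem_piAntidiag] at hk
    refine if_neg fun h => hd ?_
    rw [← hk.1]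
    have := hcoe k h
    rw [this]


lemma mc_def (i : Fin n →₀ ℕ) :
    mc i = (Nat.multinomial Finset.univ (fun j => i j) : ℝ) := rfl

lemma altSum_vanish {v m : ℕ} (h : v < m) :
    ∑ k ∈ Finset.range (m + 1), (-1 : ℝ) ^ k * (m.choose k : ℝ) * (k:ℝ)^v = 0 := by
  simpa [altSum, pw] using altSum_pw_eq_zero h

lemma altSum_diag (m : ℕ) :
    ∑ k ∈ Finset.range (m + 1), (-1 : ℝ) ^ k * (m.choose k : ℝ) * (k:ℝ)^m
      = (-1:ℝ)^m * m.factorial := by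
  simpa [altSum, pw] using altSum_pw_self m

lemma homog_iff {d : ℕ} {q : MvPolynomial (Fin n) ℝ} :
    q.IsHomogeneous d ↔ ∀ i : Fin n →₀ ℕ, q.coeff i ≠ 0 → (∑ j, i j) = d := by
  have key : ∀ i : Fin n →₀ ℕ, (Finsupp.weight (1 : Fin n → ℕ)) i = ∑ j, i j := by
    intro i
    rw [show (1 : Fin n → ℕ) = fun _ => 1 from rfl, ← Finsupp.degree_eq_weight_one, Finsupp.degree_apply]
    exact Finset.sum_subset (Finset.subset_univ _)
      (fun j _ hj => Finsupp.notMem_support_iff.1 hj)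
  constructor
  · intro hq i hi
    have h := hq hi
    rw [← h, key]
  · intro h
    exact fun i hi => by rw [key]; exact h i hi

lemma degree_sum_of_homog {d : ℕ} {q : MvPolynomial (Fin n) ℝ} (hq : q.IsHomogeneous d)
    {i : Fin n →₀ ℕ} (hi : i ∈ q.support) : (∑ j, i j) = d :=
  homog_iff.1 hq i (MvPolynomial.mem_support_iff.1 hi)

/-- Reproducing property. -/
lemma formInner_linForm_pow {d : ℕ} (a : Fin n → ℝ) {q : MvPolynomial (Fin n) ℝ}
    (hq : q.IsHomogeneous d) : formInner (linForm a ^ d) q = eval a q := by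
  rw [formInner_comm, formInner_eq_sum_left, MvPolynomial.eval_eq']
  refine Finset.sum_congr rfl fun i hi => ?_
  rw [coeff_linForm_pow, if_pos (degree_sum_of_homog hq hi), ← mc_def]
  have hm : mc i ≠ 0 := ne_of_gt (mc_pos i)
  field_simp

/-- The key polarization identity. -/
lemma polarization {d : ℕ} (u : Fin n →₀ ℕ) (hu : (∑ j, u j) = d) :
    (d.factorial : ℝ) • (monomial u (1:ℝ))
      = ∑ g ∈ Fintype.piFinset (fun j => Finset.range (u j + 1)),
          (∏ j, ((-1:ℝ)^(u j - g j) * ((u j).choose (g j) : ℝ)))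
            • (linForm (fun j => (g j : ℝ)))^d := by
  apply MvPolynomial.ext
  intro i
  rw [MvPolynomial.coeff_smul, MvPolynomial.coeff_sum, MvPolynomial.coeff_monomial]
  have hterm : ∀ g ∈ Fintype.piFinset (fun j => Finset.range (u j + 1)),
      MvPolynomial.coeff i ((∏ j, ((-1:ℝ)^(u j - g j) * ((u j).choose (g j) : ℝ)))
          • (linForm (fun j => (g j : ℝ)))^d)
      = if (∑ j, i j) = d then
          (Nat.multinomial Finset.univ (fun j => i j) : ℝ) *
            ∏ j, ((-1:ℝ)^(u j - g j) * ((u j).choose (g j) : ℝ) * ((g j : ℝ))^(i j))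
        else 0 := by
    intro g _
    rw [MvPolynomial.coeff_smul, coeff_linForm_pow]
    split
    · rw [smul_eq_mul]
      simp only [Finset.prod_mul_distrib]
      ring
    · simp
  rw [Finset.sum_congr rfl hterm]
  by_cases hd : (∑ j, i j) = d
  · simp only [if_pos hd]
    rw [← Finset.mul_sum]
    have hps := Finset.prod_univ_sum (fun j => Finset.range (u j + 1))
      (fun j t => (-1:ℝ)^(u j - t) * ((u j).choose t : ℝ) * ((t:ℕ):ℝ)^(i j))
    rw [← hps]
    have hfact : ∀ j : Fin n, (∑ t ∈ Finset.range (u j + 1),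
        ((-1:ℝ)^(u j - t) * ((u j).choose t : ℝ) * ((t:ℕ):ℝ)^(i j)))
        = (-1:ℝ)^(u j) * ∑ t ∈ Finset.range (u j + 1),
            (-1:ℝ)^t * ((u j).choose t : ℝ) * ((t:ℕ):ℝ)^(i j) := by
      intro j
      rw [Finset.mul_sum]
      refine Finset.sum_congr rfl fun t ht => ?_
      have htle : t ≤ u j := by
        have := Finset.mem_range.1 ht; omega
      have hsign : (-1:ℝ)^(u j - t) * (-1:ℝ)^t = (-1:ℝ)^(u j) := by
        rw [← pow_add, Nat.sub_add_cancel htle]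
      have h2 : (-1:ℝ)^t * (-1:ℝ)^t = 1 := by
        rw [← pow_add]; exact Even.neg_one_pow ⟨t, rfl⟩
      linear_combination ((-1:ℝ)^t * ((u j).choose t : ℝ) * ((t:ℕ):ℝ)^(i j)) * hsign
        + (-((-1:ℝ)^(u j - t) * ((u j).choose t : ℝ) * ((t:ℕ):ℝ)^(i j))) * h2
    rw [Finset.prod_congr rfl fun j _ => hfact j]
    by_cases hui : u = i
    · subst hui
      rw [if_pos rfl]
      have : ∀ j : Fin n, (-1:ℝ)^(u j) * ∑ t ∈ Finset.range (u j + 1),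
          (-1:ℝ)^t * ((u j).choose t : ℝ) * ((t:ℕ):ℝ)^(u j) = ((u j).factorial : ℝ) := by
        intro j
        rw [altSum_diag, ← mul_assoc, ← pow_add]
        have : Even (u j + u j) := ⟨u j, rfl⟩
        rw [this.neg_one_pow, one_mul]
      rw [Finset.prod_congr rfl fun j _ => this j, smul_eq_mul, mul_one]
      rw [← Nat.cast_prod, ← Nat.cast_mul]
      norm_cast
      rw [← hu, ← Nat.multinomial_spec Finset.univ (fun j => u j)]
      exact mul_comm _ _
    · rw [if_neg hui]
      -- find j with i j < u j
      have hex : ∃ j, i j < u j := by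
        by_contra hno
        push_neg at hno
        apply hui
        have hco : ∀ j, u j = i j := by
          by_contra hc
          push_neg at hc
          obtain ⟨j0, hj0⟩ := hc
          have hlt : u j0 < i j0 := lt_of_le_of_ne (hno j0) hj0
          have : (∑ j, u j) < ∑ j, i j :=
            Finset.sum_lt_sum (fun j _ => hno j) ⟨j0, Finset.mem_univ j0, hlt⟩
          omega
        ext j
        exact hco j
      obtain ⟨j0, hj0⟩ := hex
      have hz : ((-1:ℝ)^(u j0)) * ∑ t ∈ Finset.range (u j0 + 1),
          (-1:ℝ)^t * ((u j0).choose t : ℝ) * ((t:ℕ):ℝ)^(i j0) = 0 := by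
        rw [altSum_vanish hj0, mul_zero]
      rw [Finset.prod_eq_zero (Finset.mem_univ j0) hz, mul_zero, smul_zero]
  · simp only [if_neg hd, Finset.sum_const_zero]
    have : ¬ (u = i) := fun h => hd (by rw [← h]; exact hu)
    rw [if_neg this, smul_zero]


lemma aeval_pi (f : Fin n → ℝ) (p : MvPolynomial (Fin n) ℝ) : aeval f p = eval f p := by
  rw [← MvPolynomial.coe_aeval_eq_eval]; rfl

lemma compMat_add (p q : MvPolynomial (Fin n) ℝ) (M : Matrix (Fin n) (Fin n) ℝ) :
    compMat (p + q) M = compMat p M + compMat q M := by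
  rw [compMat, compMat, compMat, map_add]

lemma compMat_smul (c : ℝ) (p : MvPolynomial (Fin n) ℝ) (M : Matrix (Fin n) (Fin n) ℝ) :
    compMat (c • p) M = c • compMat p M := by
  rw [compMat, compMat, map_smul]

lemma compMat_zero (M : Matrix (Fin n) (Fin n) ℝ) : compMat (0 : MvPolynomial (Fin n) ℝ) M = 0 := by
  rw [compMat, map_zero]

lemma compMat_pow (p : MvPolynomial (Fin n) ℝ) (d : ℕ) (M : Matrix (Fin n) (Fin n) ℝ) :
    compMat (p ^ d) M = (compMat p M) ^ d := by
  rw [compMat, compMat, map_pow]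

lemma compMat_linForm (a : Fin n → ℝ) (M : Matrix (Fin n) (Fin n) ℝ) :
    compMat (linForm a) M = linForm (fun k => ∑ j, a j * M j k) := by
  rw [linForm, compMat, map_sum]
  simp only [map_mul, aeval_C, aeval_X, MvPolynomial.algebraMap_eq]
  rw [linForm]
  simp only [Finset.mul_sum]
  rw [Finset.sum_comm]
  refine Finset.sum_congr rfl fun k _ => ?_
  rw [map_sum, Finset.sum_mul]
  refine Finset.sum_congr rfl fun j _ => ?_
  rw [map_mul, mul_assoc]

lemma eval_compMat (a : Fin n → ℝ) (q : MvPolynomial (Fin n) ℝ) (M : Matrix (Fin n) (Fin n) ℝ) :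
    eval a (compMat q M) = eval (fun j => ∑ k, M j k * a k) q := by
  have hfun : (fun i => aeval a (∑ k, MvPolynomial.C (M i k) * X k))
      = fun j => ∑ k, M j k * a k := by
    funext j
    simp
  rw [compMat, ← aeval_pi, MvPolynomial.comp_aeval_apply, hfun, aeval_pi]

lemma isHomog_linForm (a : Fin n → ℝ) : (linForm a).IsHomogeneous 1 := by
  rw [linForm]
  exact MvPolynomial.IsHomogeneous.sum _ _ _
    (fun j _ => MvPolynomial.isHomogeneous_C_mul_X (a j) j)

lemma isHomog_compMat {d : ℕ} {q : MvPolynomial (Fin n) ℝ} (hq : q.IsHomogeneous d)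
    (M : Matrix (Fin n) (Fin n) ℝ) : (compMat q M).IsHomogeneous d := by
  rw [compMat, ← MvPolynomial.support_sum_monomial_coeff q, map_sum]
  refine MvPolynomial.IsHomogeneous.sum _ _ _ (fun i hi => ?_)
  rw [MvPolynomial.aeval_monomial, MvPolynomial.algebraMap_eq]
  have h1 : ((Finsupp.prod i fun j k => (∑ m, MvPolynomial.C (M j m) * X m) ^ k)).IsHomogeneous d := by
    rw [Finsupp.prod]
    have h2 := MvPolynomial.IsHomogeneous.prod i.support
      (fun j => (∑ m, MvPolynomial.C (M j m) * X m) ^ (i j)) (fun j => i j)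
      (fun j _ => by
        have := (isHomog_linForm (fun m => M j m)).pow (i j)
        rw [one_mul] at this
        rw [linForm] at this
        exact this)
    have h3 : (∑ j ∈ i.support, i j) = d := by
      rw [← degree_sum_of_homog hq hi]
      exact Finset.sum_subset (Finset.subset_univ _)
        (fun j _ hj => Finsupp.notMem_support_iff.1 hj)
    rwa [h3] at h2
  simpa using h1.C_mul (MvPolynomial.coeff i q)

lemma homog_mem_span {d : ℕ} {p : MvPolynomial (Fin n) ℝ} (hp : p.IsHomogeneous d) :
    p ∈ Submodule.span ℝ (Set.range fun a : Fin n → ℝ => linForm a ^ d) := by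
  rw [← MvPolynomial.support_sum_monomial_coeff p]
  refine Submodule.sum_mem _ fun i hi => ?_
  have hd := degree_sum_of_homog hp hi
  have h1 : monomial i (MvPolynomial.coeff i p) = (MvPolynomial.coeff i p) • monomial i (1:ℝ) := by
    rw [MvPolynomial.smul_monomial, smul_eq_mul, mul_one]
  rw [h1]
  refine Submodule.smul_mem _ _ ?_
  have hfac : (d.factorial : ℝ) ≠ 0 := Nat.cast_ne_zero.2 d.factorial_ne_zero
  have h2 : monomial i (1:ℝ) = (d.factorial : ℝ)⁻¹ • ((d.factorial : ℝ) • monomial i (1:ℝ)) := by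
    rw [smul_smul, inv_mul_cancel₀ hfac, one_smul]
  rw [h2, polarization i hd]
  exact Submodule.smul_mem _ _ (Submodule.sum_mem _ fun g _ =>
    Submodule.smul_mem _ _ (Submodule.subset_span ⟨_, rfl⟩))

/-- The adjunction identity. -/
lemma adjunction {d : ℕ} {p q : MvPolynomial (Fin n) ℝ} (hp : p.IsHomogeneous d)
    (hq : q.IsHomogeneous d) (M : Matrix (Fin n) (Fin n) ℝ) :
    formInner p (compMat q M) = formInner (compMat p M.transpose) q := by
  have hqM : (compMat q M).IsHomogeneous d := isHomog_compMat hq M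
  have hspan := homog_mem_span hp
  clear hp
  induction hspan using Submodule.span_induction with
  | mem x hx =>
      obtain ⟨a, rfl⟩ := hx
      have hfun : (fun j => ∑ k, M j k * a k) = (fun k => ∑ j, a j * M.transpose j k) := by
        funext j0
        exact Finset.sum_congr rfl fun k _ => by rw [Matrix.transpose_apply]; ring
      rw [formInner_linForm_pow a hqM, eval_compMat, compMat_pow, compMat_linForm,
        formInner_linForm_pow _ hq, hfun]
  | zero => rw [compMat_zero, formInner_zero_left, formInner_zero_left]
  | add x y hx hy ihx ihy =>
      rw [compMat_add, formInner_add_left, formInner_add_left, ihx, ihy]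
  | smul c x hx ihx =>
      rw [compMat_smul, formInner_smul_left, formInner_smul_left, ihx]


end BlenderAux

/-- The dual cone of a blender is a blender. -/
theorem isBlender_dualCone (n d : ℕ) (B : Set (MvPolynomial (Fin n) ℝ))
    (hB : IsBlender n d B) : IsBlender n d (dualCone n d B) := by
  obtain ⟨hBhom, hB0, hBadd, hBclosed, hBcomp⟩ := hB
  refine ⟨fun q hq => hq.1, ?_, ?_, ?_, ?_⟩
  · exact ⟨MvPolynomial.isHomogeneous_zero _ _ _, fun p _ => by
      rw [BlenderAux.formInner_comm, BlenderAux.formInner_zero_left]⟩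
  · intro q hq r hr
    refine ⟨hq.1.add hr.1, fun p hp => ?_⟩
    have h : formInner p (q + r) = formInner p q + formInner p r := by
      rw [BlenderAux.formInner_comm, BlenderAux.formInner_add_left,
        BlenderAux.formInner_comm q p, BlenderAux.formInner_comm r p]
    rw [h]
    exact add_nonneg (hq.2 p hp) (hr.2 p hp)
  · intro f q hf hten
    constructor
    · refine BlenderAux.homog_iff.2 fun i hi => ?_
      by_contra hd
      apply hi
      have hzero : ∀ m, (f m).coeff i = 0 := fun m => by
        by_contra hz
        exact hd (BlenderAux.homog_iff.1 (hf m).1 i hz)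
      have h0 : Tendsto (fun m => (f m).coeff i) atTop (nhds 0) := by
        simp only [hzero]
        exact tendsto_const_nhds
      exact tendsto_nhds_unique (hten i) h0
    · intro p hp
      rw [BlenderAux.formInner_eq_sum_left]
      have hlim : Tendsto (fun m => ∑ i ∈ p.support,
          p.coeff i * (f m).coeff i / BlenderAux.mc i) atTop
            (nhds (∑ i ∈ p.support, p.coeff i * q.coeff i / BlenderAux.mc i)) :=
        tendsto_finset_sum _ (fun i _ => (tendsto_const_nhds.mul (hten i)).div_const _)
      refine ge_of_tendsto hlim (Eventually.of_forall fun m => ?_)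
      rw [← BlenderAux.formInner_eq_sum_left]
      exact (hf m).2 p hp
  · intro q hq M
    refine ⟨BlenderAux.isHomog_compMat hq.1 M, fun p hp => ?_⟩
    rw [BlenderAux.adjunction (hBhom p hp) hq.1 M]
    exact hq.2 _ (hBcomp p hp M.transpose)
end

section
/- For positive integers u, v with uv = r, the Waring cone W_{n,(u,2v)} = {p ∈ F_{n,2r} : p = Σ_{k=1}^s h_k^{2v} for some s ∈ ℕ and forms h_k ∈ F_{n,u}} is a blender in F_{n,2r}; in particular, it is a closed subset of F_{n,2r}. -/
open MvPolynomial Filter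

/-- The Waring cone `W_{n,(u,w)}`: finite sums of `w`-th powers of forms of degree `u`. -/
def WaringCone (n u w : ℕ) : Set (MvPolynomial (Fin n) ℝ) :=
  {p | ∃ (s : ℕ) (h : Fin s → MvPolynomial (Fin n) ℝ),
    (∀ k, (h k).IsHomogeneous u) ∧ p = ∑ k, (h k) ^ w}

/-! ### Auxiliary machinery -/

namespace WaringAux

/-- The finset of exponents of total degree `d`. -/
noncomputable def expSet (n d : ℕ) : Finset (Fin n →₀ ℕ) := Finset.finsuppAntidiag Finset.univ d

lemma degree_eq_sum_univ {n : ℕ} (i : Fin n →₀ ℕ) :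
    i.degree = ∑ j, i j := by
  rw [Finsupp.degree]
  exact Finset.sum_subset (Finset.subset_univ _)
    (fun x _ hx => Finsupp.notMem_support_iff.mp hx)

lemma mem_expSet {n d : ℕ} {i : Fin n →₀ ℕ} : i ∈ expSet n d ↔ i.degree = d := by
  rw [expSet, Finset.mem_finsuppAntidiag, degree_eq_sum_univ]
  exact ⟨fun h => h.1, fun h => ⟨h, Finset.subset_univ _⟩⟩

/-- The polynomial with coefficient vector `c` supported on `expSet n d`. -/
noncomputable def toPoly {n d : ℕ} (c : expSet n d → ℝ) : MvPolynomial (Fin n) ℝ :=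
  ∑ i : expSet n d, monomial (i : Fin n →₀ ℕ) (c i)

lemma coeff_toPoly {n d : ℕ} (c : expSet n d → ℝ) (j : Fin n →₀ ℕ) :
    coeff j (toPoly c) = if h : j ∈ expSet n d then c ⟨j, h⟩ else 0 := by
  rw [toPoly, MvPolynomial.coeff_sum]
  split
  · rename_i h
    rw [Finset.sum_eq_single (⟨j, h⟩ : expSet n d)]
    · simp [coeff_monomial]
    · intro b _ hb
      rw [coeff_monomial, if_neg (fun hc => hb (Subtype.ext hc))]
    · simp
  · rename_i h
    apply Finset.sum_eq_zero
    intro b _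
    rw [coeff_monomial, if_neg (fun hc => h (by rw [← hc]; exact b.2))]

lemma toPoly_isHomogeneous {n d : ℕ} (c : expSet n d → ℝ) : (toPoly c).IsHomogeneous d :=
  MvPolynomial.IsHomogeneous.sum _ _ _ fun i _ => isHomogeneous_monomial _ (mem_expSet.mp i.2)

lemma toPoly_coeff {n d : ℕ} {p : MvPolynomial (Fin n) ℝ} (hp : p.IsHomogeneous d) :
    toPoly (fun i : expSet n d => coeff (i : Fin n →₀ ℕ) p) = p := by
  ext j
  rw [coeff_toPoly]
  split
  · rfl
  · rename_i h
    exact (hp.coeff_eq_zero (fun hc => h (mem_expSet.mpr hc))).symm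

lemma toPoly_smul {n d : ℕ} (t : ℝ) (c : expSet n d → ℝ) :
    toPoly (t • c) = MvPolynomial.C t * toPoly c := by
  rw [toPoly, toPoly, Finset.mul_sum]
  refine Finset.sum_congr rfl fun i _ => ?_
  rw [Pi.smul_apply, smul_eq_mul, C_mul_monomial]

/-- Equality of homogeneous polynomials from equal coefficients on `expSet`. -/
lemma homog_ext {n d : ℕ} {p q : MvPolynomial (Fin n) ℝ} (hp : p.IsHomogeneous d)
    (hq : q.IsHomogeneous d)
    (h : ∀ i : expSet n d, coeff (i : Fin n →₀ ℕ) p = coeff (i : Fin n →₀ ℕ) q) : p = q := by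
  ext j
  by_cases hj : j ∈ expSet n d
  · exact h ⟨j, hj⟩
  · rw [hp.coeff_eq_zero (fun hc => hj (mem_expSet.mpr hc)),
      hq.coeff_eq_zero (fun hc => hj (mem_expSet.mpr hc))]

section cont
variable {A : Type*} [TopologicalSpace A] {n : ℕ}

lemma cont_coeff_mul {F G : A → MvPolynomial (Fin n) ℝ}
    (hF : ∀ j, Continuous fun a => coeff j (F a)) (hG : ∀ j, Continuous fun a => coeff j (G a))
    (j : Fin n →₀ ℕ) : Continuous fun a => coeff j (F a * G a) := by
  simp_rw [MvPolynomial.coeff_mul]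
  exact continuous_finset_sum _ fun p _ => (hF p.1).mul (hG p.2)

lemma cont_coeff_pow {F : A → MvPolynomial (Fin n) ℝ}
    (hF : ∀ j, Continuous fun a => coeff j (F a)) (w : ℕ) (j : Fin n →₀ ℕ) :
    Continuous fun a => coeff j (F a ^ w) := by
  induction w generalizing j with
  | zero => simpa [MvPolynomial.coeff_one] using continuous_const
  | succ k ih =>
    simp_rw [pow_succ]
    exact cont_coeff_mul (fun j => ih j) hF j

lemma cont_coeff_toPoly {d : ℕ} (j : Fin n →₀ ℕ) :
    Continuous fun c : expSet n d → ℝ => coeff j (toPoly c) := by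
  simp_rw [coeff_toPoly]
  split
  · exact continuous_apply _
  · exact continuous_const

end cont

/-- The sum of `w`-th powers of the forms with coefficient vectors `c k`. -/
noncomputable def Phi {n : ℕ} (N u w : ℕ) (c : Fin N → (expSet n u → ℝ)) :
    MvPolynomial (Fin n) ℝ := ∑ k, (toPoly (c k)) ^ w

lemma Phi_mem {n : ℕ} (N u w : ℕ) (c : Fin N → (expSet n u → ℝ)) :
    Phi N u w c ∈ WaringCone n u w :=
  ⟨N, fun k => toPoly (c k), fun k => toPoly_isHomogeneous _, rfl⟩

lemma Phi_isHomogeneous {n : ℕ} (N u w : ℕ) (c : Fin N → (expSet n u → ℝ)) :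
    (Phi N u w c).IsHomogeneous (u * w) :=
  MvPolynomial.IsHomogeneous.sum _ _ _ fun k _ => (toPoly_isHomogeneous _).pow w

lemma cont_coeff_Phi {n : ℕ} (N u w : ℕ) (j : Fin n →₀ ℕ) :
    Continuous fun c : Fin N → (expSet n u → ℝ) => coeff j (Phi N u w c) := by
  simp_rw [Phi, MvPolynomial.coeff_sum]
  refine continuous_finset_sum _ fun k _ => ?_
  exact (cont_coeff_pow (F := fun c : Fin N → (expSet n u → ℝ) => toPoly (c k))
    (fun j => (cont_coeff_toPoly j).comp (continuous_apply k)) w j)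

lemma Phi_smul {n : ℕ} (N u w : ℕ) (t : ℝ) (c : Fin N → (expSet n u → ℝ)) :
    Phi N u w (t • c) = MvPolynomial.C (t ^ w) * Phi N u w c := by
  rw [Phi, Phi, Finset.mul_sum]
  refine Finset.sum_congr rfl fun k _ => ?_
  rw [Pi.smul_apply, toPoly_smul, mul_pow, ← map_pow]

lemma Phi_eq_zero {n N u w : ℕ} (hw : Even w) (hw0 : w ≠ 0) (c : Fin N → (expSet n u → ℝ))
    (h : Phi N u w c = 0) : c = 0 := by
  have hev : ∀ (k : Fin N) (x : Fin n → ℝ), eval x (toPoly (c k)) = 0 := by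
    intro k x
    have h0 : ∑ k : Fin N, (eval x (toPoly (c k))) ^ w = 0 := by
      have := congrArg (eval x) h
      simpa [Phi, map_sum, map_pow] using this
    have := (Finset.sum_eq_zero_iff_of_nonneg
      (fun k _ => hw.pow_nonneg (eval x (toPoly (c k))))).mp h0 k (Finset.mem_univ k)
    exact pow_eq_zero_iff hw0 |>.mp this
  funext k i
  have hz : toPoly (c k) = 0 := by
    apply MvPolynomial.funext
    intro x
    simp [hev k x]
  have := congrArg (coeff (i : Fin n →₀ ℕ)) hz
  rw [coeff_toPoly, dif_pos i.2] at this
  simpa using this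

/-- The coefficient-vector linear map. -/
noncomputable def cv (n d : ℕ) : MvPolynomial (Fin n) ℝ →ₗ[ℝ] (expSet n d → ℝ) where
  toFun p := fun i => coeff (i : Fin n →₀ ℕ) p
  map_add' p q := by funext i; simp
  map_smul' t p := by funext i; simp

lemma cv_C_mul {n d : ℕ} (a : ℝ) (q : MvPolynomial (Fin n) ℝ) :
    cv n d (MvPolynomial.C a * q) = a • cv n d q := by
  funext i; simp [cv, coeff_C_mul]

/-- Carathéodory-type reduction: every element of the Waring cone is a sum of a
*fixed* number of `w`-th powers. -/
lemma caratheodory {n u w : ℕ} (hw : 0 < w) {p : MvPolynomial (Fin n) ℝ}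
    (hp : p ∈ WaringCone n u w) :
    ∃ c : Fin ((expSet n (u * w)).card + 1) → (expSet n u → ℝ), p = Phi _ u w c := by
  classical
  set N := (expSet n (u * w)).card + 1 with hN
  obtain ⟨s, h, hh, rfl⟩ := hp
  rcases Nat.eq_zero_or_pos s with hs | hs
  · subst hs
    refine ⟨0, ?_⟩
    simp only [Finset.univ_eq_empty, Finset.sum_empty]
    rw [Phi]
    apply (Finset.sum_eq_zero fun k _ => ?_).symm
    show toPoly ((0 : Fin N → expSet n u → ℝ) k) ^ w = 0
    have h0 : toPoly (n := n) (d := u) 0 = 0 := by simp [toPoly]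
    simp only [Pi.zero_apply, h0]
    exact zero_pow hw.ne'
  · set S : Set (expSet n (u * w) → ℝ) :=
      {x | ∃ g : MvPolynomial (Fin n) ℝ, g.IsHomogeneous u ∧ x = cv n (u * w) (g ^ w)} with hS
    have hy : (s : ℝ)⁻¹ • cv n (u * w) (∑ k, h k ^ w) ∈ convexHull ℝ S := by
      have hcm := Finset.centerMass_mem_convexHull (s := S)
        (t := (Finset.univ : Finset (Fin s)))
        (w := fun _ => (1 : ℝ)) (z := fun k => cv n (u * w) (h k ^ w))
        (fun i _ => zero_le_one)
        (by simp [Finset.card_univ]; positivity)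
        (fun k _ => ⟨h k, hh k, rfl⟩)
      rw [Finset.centerMass] at hcm
      simpa [map_sum] using hcm
    obtain ⟨ι, hι, z, wt, hzS, hAI, hwt_pos, hwt_sum, hsum⟩ :=
      eq_pos_convex_span_of_mem_convexHull hy
    have hcard : Fintype.card ι ≤ N := by
      rcases isEmpty_or_nonempty ι with hne | hne
      · simp [Fintype.card_eq_zero]
      · have h1 := hAI.finrank_vectorSpan_add_one
        have h2 : Module.finrank ℝ (vectorSpan ℝ (Set.range z)) ≤
            Module.finrank ℝ (expSet n (u * w) → ℝ) := Submodule.finrank_le _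
        rw [Module.finrank_pi ℝ, Fintype.card_coe] at h2
        omega
    choose g hg hz' using fun i : ι => hzS ⟨i, rfl⟩
    set α : ι → ℝ := fun i => ((s : ℝ) * wt i) ^ ((w : ℝ)⁻¹) with hα
    have hαw : ∀ i, α i ^ w = (s : ℝ) * wt i := by
      intro i
      have h0 : (0 : ℝ) ≤ (s : ℝ) * wt i :=
        mul_nonneg (Nat.cast_nonneg s) (hwt_pos i).le
      exact Real.rpow_inv_natCast_pow h0 hw.ne'
    set h' : ι → MvPolynomial (Fin n) ℝ := fun i => MvPolynomial.C (α i) * g i with hh'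
    have hh'hom : ∀ i, (h' i).IsHomogeneous u := fun i => (hg i).C_mul _
    have key : (∑ k, h k ^ w) = ∑ i : ι, h' i ^ w := by
      apply homog_ext (d := u * w)
      · exact MvPolynomial.IsHomogeneous.sum _ _ _ fun k _ => (hh k).pow w
      · exact MvPolynomial.IsHomogeneous.sum _ _ _ fun i _ => (hh'hom i).pow w
      · intro j
        have hcv : cv n (u * w) (∑ k, h k ^ w) = cv n (u * w) (∑ i : ι, h' i ^ w) := by
          have hL : cv n (u * w) (∑ k, h k ^ w) = ∑ i : ι, ((s : ℝ) * wt i) • z i := by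
            have h3 := congrArg (fun y => (s : ℝ) • y) hsum
            simp only [Finset.smul_sum, smul_smul] at h3
            rw [mul_inv_cancel₀ (by exact_mod_cast hs.ne' : (s : ℝ) ≠ 0), one_smul] at h3
            exact h3.symm
          have hR : cv n (u * w) (∑ i : ι, h' i ^ w) = ∑ i : ι, ((s : ℝ) * wt i) • z i := by
            rw [map_sum]
            refine Finset.sum_congr rfl fun i _ => ?_
            rw [hh', mul_pow, ← map_pow, cv_C_mul, hαw, hz' i]
          rw [hL, hR]
        exact congrFun hcv j
    set t := Fintype.card ι with ht
    set e := Fintype.equivFin ι with he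
    set f : ℕ → MvPolynomial (Fin n) ℝ :=
      fun k => if hk : k < t then h' (e.symm ⟨k, hk⟩) else 0 with hf
    have hfhom : ∀ k, (f k).IsHomogeneous u := by
      intro k
      simp only [hf]
      split
      · exact hh'hom _
      · exact isHomogeneous_zero _ _ _
    have hsum2 : ∑ k : Fin N, f k ^ w = ∑ i : ι, h' i ^ w := by
      rw [Fin.sum_univ_eq_sum_range (fun k => f k ^ w) N]
      rw [← Finset.sum_subset (Finset.range_subset_range.mpr hcard)]
      · rw [← Fin.sum_univ_eq_sum_range (fun k => f k ^ w) t]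
        rw [← Equiv.sum_comp e.symm (fun i => h' i ^ w)]
        refine Finset.sum_congr rfl fun k _ => ?_
        have hfk : f k = h' (e.symm k) := by
          simp only [hf, Fin.is_lt, dif_pos, Fin.eta]
        rw [hfk]
      · intro x _ hx
        rw [Finset.mem_range, not_lt] at hx
        simp only [hf, dif_neg (not_lt.mpr hx)]
        exact zero_pow hw.ne'
    refine ⟨fun k => fun i : expSet n u => coeff (i : Fin n →₀ ℕ) (f k), ?_⟩
    rw [key, ← hsum2, Phi]
    refine Finset.sum_congr rfl fun k _ => ?_
    rw [toPoly_coeff (hfhom k)]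

/-- The norm-like functional used in the compactness argument. -/
noncomputable def Gf {n : ℕ} (N u w : ℕ) (x : Fin N → (expSet n u → ℝ)) : ℝ :=
  ∑ j ∈ expSet n (u * w), |coeff j (Phi N u w x)|

lemma Gf_cont {n : ℕ} (N u w : ℕ) : Continuous (Gf (n := n) N u w) :=
  continuous_finset_sum _ fun j _ => (cont_coeff_Phi N u w j).abs

lemma Gf_nonneg {n : ℕ} (N u w : ℕ) (x : Fin N → (expSet n u → ℝ)) : 0 ≤ Gf N u w x :=
  Finset.sum_nonneg fun j _ => abs_nonneg _

lemma Gf_eq_zero {n : ℕ} {N u w : ℕ} (hwe : Even w) (hw0 : w ≠ 0)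
    (x : Fin N → (expSet n u → ℝ)) (hx : Gf N u w x = 0) : x = 0 := by
  refine Phi_eq_zero hwe hw0 x ?_
  have hco : ∀ j ∈ expSet n (u * w), coeff j (Phi N u w x) = 0 := by
    intro j hj
    have := (Finset.sum_eq_zero_iff_of_nonneg fun j _ => abs_nonneg _).mp hx j hj
    exact abs_eq_zero.mp this
  ext j
  by_cases hj : j ∈ expSet n (u * w)
  · rw [hco j hj, coeff_zero]
  · rw [(Phi_isHomogeneous N u w x).coeff_eq_zero (fun hd => hj (mem_expSet.mpr hd)),
      coeff_zero]

lemma Gf_smul {n : ℕ} (N u w : ℕ) {t : ℝ} (ht : 0 ≤ t) (x : Fin N → (expSet n u → ℝ)) :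
    Gf N u w (t • x) = t ^ w * Gf N u w x := by
  rw [Gf, Gf, Finset.mul_sum]
  refine Finset.sum_congr rfl fun j _ => ?_
  rw [Phi_smul, coeff_C_mul, abs_mul, abs_pow, abs_of_nonneg ht]

set_option maxHeartbeats 1000000 in
set_option synthInstance.maxHeartbeats 200000 in
/-- Closedness of the Waring cone under coefficientwise limits. -/
lemma wc_closed {n u w : ℕ} (hw0 : 0 < w) (hwe : Even w)
    (f : ℕ → MvPolynomial (Fin n) ℝ) (q : MvPolynomial (Fin n) ℝ)
    (hf : ∀ m, f m ∈ WaringCone n u w) (hq : CoeffTendsto f q) : q ∈ WaringCone n u w := by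
  classical
  set N := (expSet n (u * w)).card + 1 with hN
  choose c hc using fun m => caratheodory hw0 (hf m)
  rcases Finset.eq_empty_or_nonempty (expSet n u) with hB | hB
  · have hzero : ∀ m, f m = 0 := by
      intro m
      rw [hc m, Phi]
      refine Finset.sum_eq_zero fun k _ => ?_
      have : toPoly (c m k) = 0 := by
        rw [toPoly]
        apply Finset.sum_eq_zero
        rintro ⟨i, hi⟩ _
        exact absurd hi (by simp [hB])
      rw [this, zero_pow hw0.ne']
    have : q = 0 := by
      ext j
      have h1 : Tendsto (fun m => coeff j (f m)) atTop (nhds (coeff j q)) := hq j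
      have h2 : Tendsto (fun m => coeff j (f m)) atTop (nhds 0) := by
        simp only [hzero]; simpa using tendsto_const_nhds
      rw [tendsto_nhds_unique h1 h2, coeff_zero]
    rw [this]
    exact ⟨0, Fin.elim0, fun k => k.elim0, by simp⟩
  · letI E := (Fin N → (expSet n u → ℝ))
    haveI : Nonempty (expSet n u) := ⟨⟨hB.choose, hB.choose_spec⟩⟩
    haveI : Nonempty (Fin N) := ⟨⟨0, Nat.succ_pos _⟩⟩
    haveI : Nontrivial (expSet n u → ℝ) := Function.nontrivial
    haveI : Nontrivial E := Function.nontrivial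
    have hSne : (Metric.sphere (0 : E) 1).Nonempty := NormedSpace.sphere_nonempty.mpr zero_le_one
    obtain ⟨c₀, hc₀, hδ⟩ := (isCompact_sphere (0 : E) 1).exists_isMinOn hSne
      (Gf_cont N u w).continuousOn
    set δ := Gf N u w c₀ with hδdef
    have hc₀norm : ‖c₀‖ = 1 := by simpa using hc₀
    have hδpos : 0 < δ := by
      rcases (Gf_nonneg N u w c₀).lt_or_eq with h | h
      · exact h
      · exfalso
        have h0 := Gf_eq_zero hwe hw0.ne' c₀ h.symm
        rw [h0, norm_zero] at hc₀norm
        exact one_ne_zero hc₀norm.symm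
    have hlow : ∀ x : E, δ * ‖x‖ ^ w ≤ Gf N u w x := by
      intro x
      by_cases hx : x = 0
      · rw [hx, norm_zero, zero_pow hw0.ne', mul_zero]
        exact Gf_nonneg N u w 0
      · have hnx : ‖x‖ ≠ 0 := norm_ne_zero_iff.mpr hx
        set x' := ‖x‖⁻¹ • x with hx'
        have hx'S : x' ∈ Metric.sphere (0 : E) 1 := by
          simp [hx', norm_smul, abs_of_nonneg (inv_nonneg.mpr (norm_nonneg x)),
            inv_mul_cancel₀ hnx]
        have hxx : x = ‖x‖ • x' := by
          rw [hx', smul_smul, mul_inv_cancel₀ hnx, one_smul]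
        calc δ * ‖x‖ ^ w ≤ Gf N u w x' * ‖x‖ ^ w :=
              mul_le_mul_of_nonneg_right (hδ hx'S) (pow_nonneg (norm_nonneg x) w)
          _ = Gf N u w x := by rw [mul_comm, ← Gf_smul N u w (norm_nonneg x) x', ← hxx]
    have hGc : ∀ m, Gf N u w (c m) = ∑ j ∈ expSet n (u * w), |coeff j (f m)| := by
      intro m
      rw [Gf, hc m]
    have hbtend : Tendsto (fun m => Gf N u w (c m)) atTop
        (nhds (∑ j ∈ expSet n (u * w), |coeff j q|)) := by
      simp only [hGc]
      exact tendsto_finset_sum _ fun j _ => (hq j).abs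
    obtain ⟨C, hC⟩ := hbtend.bddAbove_range
    have hCb : ∀ m, Gf N u w (c m) ≤ C := fun m => hC ⟨m, rfl⟩
    set R := max 1 (C / δ) with hR
    have hnorm : ∀ m, ‖c m‖ ≤ R := by
      intro m
      have h1 : δ * ‖c m‖ ^ w ≤ C := (hlow (c m)).trans (hCb m)
      have h2 : ‖c m‖ ^ w ≤ C / δ := (le_div_iff₀' hδpos).mpr h1
      rcases le_or_gt ‖c m‖ 1 with h | h
      · exact h.trans (le_max_left _ _)
      · have h3 : ‖c m‖ ≤ ‖c m‖ ^ w := le_self_pow₀ h.le hw0.ne'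
        exact (h3.trans h2).trans (le_max_right _ _)
    have hmem : ∀ m, c m ∈ Metric.closedBall (0 : E) R := by
      intro m
      rw [Metric.mem_closedBall, dist_zero_right]
      exact hnorm m
    obtain ⟨a, -, φ, hφmono, hφtend⟩ :=
      tendsto_subseq_of_bounded Metric.isBounded_closedBall hmem
    have hqa : q = Phi N u w a := by
      ext j
      have h1 : Tendsto (fun m => coeff j (f (φ m))) atTop (nhds (coeff j q)) :=
        (hq j).comp hφmono.tendsto_atTop
      have h2 : Tendsto (fun m => coeff j (Phi N u w (c (φ m)))) atTop
          (nhds (coeff j (Phi N u w a))) :=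
        ((cont_coeff_Phi N u w j).tendsto a).comp hφtend
      have heq : (fun m => coeff j (f (φ m))) = fun m => coeff j (Phi N u w (c (φ m))) := by
        funext m; rw [hc (φ m)]
      rw [heq] at h1
      exact tendsto_nhds_unique h1 h2
    rw [hqa]
    exact Phi_mem N u w a

end WaringAux

/-- If `uv = r`, then `W_{n,(u,2v)}` is a blender in `F_{n,2r}`; in particular it is
closed. -/
theorem isBlender_waringCone (n u v r : ℕ) (hu : 0 < u) (hv : 0 < v) (huv : u * v = r) :
    IsBlender n (2 * r) (WaringCone n u (2 * v)) := by
  have hd : u * (2 * v) = 2 * r := by rw [← huv]; ring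
  refine ⟨?_, ?_, ?_, ?_, ?_⟩
  · intro p hp
    obtain ⟨s, h, hh, rfl⟩ := hp
    rw [← hd]
    exact MvPolynomial.IsHomogeneous.sum _ _ _ (fun k _ => (hh k).pow _)
  · exact ⟨0, Fin.elim0, fun k => k.elim0, by simp⟩
  · intro p hp q hq
    obtain ⟨s, h, hh, rfl⟩ := hp
    obtain ⟨t, g, hg, rfl⟩ := hq
    refine ⟨s + t, Fin.append h g, ?_, ?_⟩
    · intro k
      refine Fin.addCases (fun i => ?_) (fun i => ?_) k
      · rw [Fin.append_left]; exact hh i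
      · rw [Fin.append_right]; exact hg i
    · rw [Fin.sum_univ_add]
      simp
  · exact WaringAux.wc_closed (by positivity) ⟨v, by ring⟩
  · intro p hp M
    obtain ⟨s, h, hh, rfl⟩ := hp
    refine ⟨s, fun k => compMat (h k) M, fun k => ?_, ?_⟩
    · have := (hh k).aeval (fun j => ∑ k, MvPolynomial.C (M j k) * X k)
        (fun i => MvPolynomial.IsHomogeneous.sum _ _ _ fun k _ => isHomogeneous_C_mul_X _ _)
      simpa [compMat] using this
    · simp [compMat, map_sum, map_pow]
end

section
/- P_{n,2r} and Q_{n,2r} are dual cones with respect to the inner product [·,·]: a form q ∈ F_{n,2r} satisfies [p,q] ≥ 0 for every p ∈ Q_{n,2r} if and only if q ∈ P_{n,2r}; and a form p ∈ F_{n,2r} satisfies [p,q] ≥ 0 for every q ∈ P_{n,2r} if and only if p ∈ Q_{n,2r}. -/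
open MvPolynomial Filter

namespace PsdDualAux

open Finset

variable {n : ℕ}

/-- finsupp from a function on a fintype -/
noncomputable def mono (k : Fin n → ℕ) : Fin n →₀ ℕ := Finsupp.equivFunOnFinite.symm k

@[simp] lemma mono_apply (k : Fin n → ℕ) (j : Fin n) : mono k j = k j := rfl

lemma mono_injective : Function.Injective (mono (n := n)) :=
  Finsupp.equivFunOnFinite.symm.injective

lemma mono_coeFn (i : Fin n →₀ ℕ) : mono (fun j => i j) = i :=
  Finsupp.equivFunOnFinite.symm_apply_apply i

lemma degree_mono (k : Fin n → ℕ) : (mono k).degree = ∑ j, k j := by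
  rw [Finsupp.degree]
  apply Finset.sum_subset (Finset.subset_univ _)
  intro j _ hj
  simpa [Finsupp.mem_support_iff] using hj

lemma degree_eq_sum_univ (i : Fin n →₀ ℕ) : i.degree = ∑ j, i j := by
  conv_lhs => rw [← mono_coeFn i]
  exact degree_mono _

variable (n) in
/-- The finset of exponent vectors of total degree `d`. -/
noncomputable def T (d : ℕ) : Finset (Fin n → ℕ) := Finset.piAntidiag Finset.univ d

lemma mem_T {d : ℕ} {k : Fin n → ℕ} : k ∈ T n d ↔ ∑ j, k j = d := by
  simp [T]

variable (n) in
/-- Coefficient space for degree-`d` forms. -/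
abbrev W (d : ℕ) := {k // k ∈ T n d} → ℝ

variable {d : ℕ}

noncomputable def toW (d : ℕ) (p : MvPolynomial (Fin n) ℝ) : W n d :=
  fun k => MvPolynomial.coeff (mono k.1) p

noncomputable def ofW (w : W n d) : MvPolynomial (Fin n) ℝ :=
  ∑ k : {k // k ∈ T n d}, MvPolynomial.monomial (mono k.1) (w k)

lemma toW_sum {ι : Type*} (s : Finset ι) (f : ι → MvPolynomial (Fin n) ℝ) :
    toW d (∑ i ∈ s, f i) = ∑ i ∈ s, toW d (f i) := by
  funext k
  simp [toW, MvPolynomial.coeff_sum]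

lemma toW_ofW (w : W n d) : toW d (ofW w) = w := by
  funext k
  rw [toW, ofW, MvPolynomial.coeff_sum]
  rw [Finset.sum_eq_single k]
  · simp [MvPolynomial.coeff_monomial]
  · intro k' _ hk'
    rw [MvPolynomial.coeff_monomial, if_neg]
    exact fun h => hk' (Subtype.ext (mono_injective h))
  · intro h; exact absurd (Finset.mem_univ k) h

lemma isHomogeneous_ofW (w : W n d) : (ofW w).IsHomogeneous d := by
  apply MvPolynomial.IsHomogeneous.sum
  intro k _
  exact MvPolynomial.isHomogeneous_monomial _ (by rw [degree_mono]; exact mem_T.mp k.2)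

/-- reindexing lemma: sums over degree-`d` supports become sums over `T`. -/
lemma sum_eq_sum_T {M : Type*} [AddCommMonoid M] (F : (Fin n →₀ ℕ) → M)
    (s : Finset (Fin n →₀ ℕ))
    (hs : ∀ i ∈ s, i.degree = d) (hF : ∀ i : Fin n →₀ ℕ, i.degree = d → i ∉ s → F i = 0) :
    ∑ i ∈ s, F i = ∑ k : {k // k ∈ T n d}, F (mono k.1) := by
  classical
  rw [Finset.sum_coe_sort (T n d) (fun k => F (mono k))]
  rw [← Finset.sum_image (s := T n d) (g := mono) (f := F)
    (fun x _ y _ h => mono_injective h)]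
  apply Finset.sum_subset
  · intro i hi
    rw [Finset.mem_image]
    exact ⟨fun j => i j, mem_T.mpr (by rw [← degree_eq_sum_univ]; exact hs i hi), mono_coeFn i⟩
  · intro i hi hnotin
    obtain ⟨k, hk, rfl⟩ := Finset.mem_image.mp hi
    exact hF _ (by rw [degree_mono]; exact mem_T.mp hk) hnotin

lemma ofW_toW {p : MvPolynomial (Fin n) ℝ} (hp : p.IsHomogeneous d) : ofW (toW d p) = p := by
  unfold ofW toW
  conv_rhs => rw [← MvPolynomial.support_sum_monomial_coeff p]
  rw [sum_eq_sum_T (fun i => MvPolynomial.monomial i (MvPolynomial.coeff i p)) p.support]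
  · intro i hi
    by_contra h
    exact (MvPolynomial.mem_support_iff.mp hi) (hp.coeff_eq_zero h)
  · intro i _ hi
    rw [MvPolynomial.notMem_support_iff.mp hi, MvPolynomial.monomial_zero]

end PsdDualAux

namespace PsdDualAux

open Finset

variable {n d : ℕ}

lemma multinomial_ne_zero (k : Fin n → ℕ) :
    (Nat.multinomial Finset.univ k : ℝ) ≠ 0 := by
  exact_mod_cast (Nat.multinomial_pos _ _).ne'

lemma formInner_eq {p q : MvPolynomial (Fin n) ℝ} (hp : p.IsHomogeneous d)
    (hq : q.IsHomogeneous d) :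
    formInner p q = ∑ k : {k // k ∈ T n d},
      toW d p k * toW d q k / (Nat.multinomial Finset.univ k.1 : ℝ) := by
  rw [formInner]
  have := sum_eq_sum_T (d := d)
    (fun i => MvPolynomial.coeff i p * MvPolynomial.coeff i q /
      (Nat.multinomial Finset.univ (fun j => i j) : ℝ)) (p.support ∪ q.support)
    (by
      intro i hi
      rcases Finset.mem_union.mp hi with h | h
      · by_contra hne; exact (MvPolynomial.mem_support_iff.mp h) (hp.coeff_eq_zero hne)
      · by_contra hne; exact (MvPolynomial.mem_support_iff.mp h) (hq.coeff_eq_zero hne))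
    (by
      intro i _ hi
      rw [Finset.mem_union, not_or] at hi
      simp only [MvPolynomial.notMem_support_iff.mp hi.1, zero_mul, zero_div])
  rw [this]
  apply Finset.sum_congr rfl
  intro k _
  simp only [toW]
  congr 1

lemma linForm_pow_expand (a : Fin n → ℝ) (d : ℕ) :
    linForm a ^ d = ∑ k ∈ T n d,
      MvPolynomial.monomial (mono k)
        ((Nat.multinomial Finset.univ k : ℝ) * ∏ j, a j ^ k j) := by
  rw [linForm, Finset.sum_pow_eq_sum_piAntidiag]
  apply Finset.sum_congr rfl
  intro k _
  rw [MvPolynomial.monomial_eq, Finsupp.prod_pow]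
  simp only [mono_apply, mul_pow, Finset.prod_mul_distrib, map_mul, map_natCast, map_prod,
    MvPolynomial.C_pow]
  ring

end PsdDualAux

namespace PsdDualAux

open Finset

variable {n d : ℕ}

attribute [irreducible] T

variable (n d) in
/-- dimension bound -/
noncomputable def Ncard : ℕ := Fintype.card {k // k ∈ T n d}

attribute [irreducible] Ncard

noncomputable def Lmap (n d : ℕ) (a : Fin n → ℝ) : W n d :=
  fun k => (Nat.multinomial Finset.univ k.1 : ℝ) * ∏ j, a j ^ k.1 j

lemma toW_linForm_pow (a : Fin n → ℝ) : toW d (linForm a ^ d) = Lmap n d a := by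
  funext k
  rw [toW, linForm_pow_expand, MvPolynomial.coeff_sum, Finset.sum_eq_single_of_mem k.1 k.2]
  · rw [MvPolynomial.coeff_monomial, if_pos rfl]; rfl
  · intro k' _ hk'
    rw [MvPolynomial.coeff_monomial, if_neg (fun h => hk' (mono_injective h))]

lemma isHomogeneous_linForm (a : Fin n → ℝ) : (linForm a).IsHomogeneous 1 := by
  apply MvPolynomial.IsHomogeneous.sum
  intro j _
  simpa using (MvPolynomial.isHomogeneous_C (Fin n) (a j)).mul (MvPolynomial.isHomogeneous_X ℝ j)

lemma isHomogeneous_linForm_pow (a : Fin n → ℝ) : (linForm a ^ d).IsHomogeneous d := by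
  simpa using (isHomogeneous_linForm a).pow d

lemma isHomogeneous_sumPow {p : MvPolynomial (Fin n) ℝ} (hp : p ∈ SumPow n d) :
    p.IsHomogeneous d := by
  obtain ⟨s, a, rfl⟩ := hp
  exact MvPolynomial.IsHomogeneous.sum _ _ _ (fun k _ => isHomogeneous_linForm_pow (a k))

lemma eval_homog {q : MvPolynomial (Fin n) ℝ} (hq : q.IsHomogeneous d) (u : Fin n → ℝ) :
    MvPolynomial.eval u q = ∑ k : {k // k ∈ T n d}, toW d q k * ∏ j, u j ^ k.1 j := by
  rw [MvPolynomial.eval_eq']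
  rw [sum_eq_sum_T (fun i => MvPolynomial.coeff i q * ∏ j, u j ^ i j) q.support
    (fun i hi => by
      by_contra hne; exact (MvPolynomial.mem_support_iff.mp hi) (hq.coeff_eq_zero hne))
    (fun i _ hi => by simp only [MvPolynomial.notMem_support_iff.mp hi, zero_mul])]
  rfl

lemma formInner_linForm_pow {q : MvPolynomial (Fin n) ℝ} (hq : q.IsHomogeneous d)
    (a : Fin n → ℝ) :
    formInner (linForm a ^ d) q = MvPolynomial.eval a q := by
  rw [formInner_eq (isHomogeneous_linForm_pow a) hq, eval_homog hq a]
  apply Finset.sum_congr rfl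
  intro k _
  rw [toW_linForm_pow]
  have hc := multinomial_ne_zero (n := n) k.1
  rw [Lmap]
  field_simp

lemma formInner_sum_left {ι : Type*} (s : Finset ι) (f : ι → MvPolynomial (Fin n) ℝ)
    {q : MvPolynomial (Fin n) ℝ} (hf : ∀ i ∈ s, (f i).IsHomogeneous d)
    (hq : q.IsHomogeneous d) :
    formInner (∑ i ∈ s, f i) q = ∑ i ∈ s, formInner (f i) q := by
  rw [formInner_eq (MvPolynomial.IsHomogeneous.sum _ _ _ hf) hq, toW_sum]
  simp only [Finset.sum_apply, Finset.sum_mul, Finset.sum_div]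
  rw [Finset.sum_comm]
  exact Finset.sum_congr rfl (fun i hi => (formInner_eq (hf i hi) hq).symm)

end PsdDualAux

namespace PsdDualAux

open Finset

variable {n d : ℕ}

lemma Lmap_smul (c : ℝ) (a : Fin n → ℝ) :
    Lmap n d (c • a) = c ^ d • Lmap n d a := by
  funext k
  simp only [Lmap, Pi.smul_apply, smul_eq_mul]
  have : ∏ j, (c * a j) ^ k.1 j = c ^ d * ∏ j, a j ^ k.1 j := by
    simp only [mul_pow, Finset.prod_mul_distrib, Finset.prod_pow_eq_pow_sum]
    rw [mem_T.mp k.2]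
  rw [this]; ring

lemma Lmap_zero (hd : d ≠ 0) : Lmap n d 0 = 0 := by
  funext k
  have hex : ∃ j, k.1 j ≠ 0 := by
    by_contra h
    push_neg at h
    have hk := mem_T.mp k.2
    rw [Finset.sum_congr rfl (fun j _ => h j), Finset.sum_const, smul_zero] at hk
    exact hd hk.symm
  obtain ⟨j, hj⟩ := hex
  show (Nat.multinomial Finset.univ k.1 : ℝ) * ∏ j', (0:ℝ) ^ k.1 j' = 0
  rw [Finset.prod_eq_zero (Finset.mem_univ j) (zero_pow hj), mul_zero]

variable (n d) in
def Scone : Set (W n d) :=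
  {w | ∃ (s : ℕ) (a : Fin s → Fin n → ℝ), w = ∑ k, Lmap n d (a k)}

lemma Scone_zero : (0 : W n d) ∈ Scone n d :=
  ⟨0, fun k => 0, by simp⟩

lemma Lmap_mem_Scone (a : Fin n → ℝ) : Lmap n d a ∈ Scone n d :=
  ⟨1, fun _ => a, by simp⟩

lemma Scone_add {w₁ w₂ : W n d} (h₁ : w₁ ∈ Scone n d) (h₂ : w₂ ∈ Scone n d) :
    w₁ + w₂ ∈ Scone n d := by
  obtain ⟨s₁, a₁, rfl⟩ := h₁
  obtain ⟨s₂, a₂, rfl⟩ := h₂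
  refine ⟨s₁ + s₂, Fin.append a₁ a₂, ?_⟩
  rw [Fin.sum_univ_add]
  simp [Fin.append_left, Fin.append_right]

lemma Scone_smul {c : ℝ} (hc : 0 ≤ c) {w : W n d} (hd : d ≠ 0) (h : w ∈ Scone n d) :
    c • w ∈ Scone n d := by
  obtain ⟨s, a, rfl⟩ := h
  refine ⟨s, fun k => (c ^ ((d : ℝ)⁻¹)) • a k, ?_⟩
  have he : (0:ℝ) ≤ c ^ ((d : ℝ)⁻¹) := Real.rpow_nonneg hc _
  have hpow : (c ^ ((d : ℝ)⁻¹)) ^ d = c := Real.rpow_inv_natCast_pow hc hd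
  rw [Finset.smul_sum]
  apply Finset.sum_congr rfl
  intro k _
  rw [Lmap_smul, hpow]

lemma convex_Scone (hd : d ≠ 0) : Convex ℝ (Scone n d) := by
  intro x hx y hy a b ha hb _
  exact Scone_add (Scone_smul ha hd hx) (Scone_smul hb hd hy)

end PsdDualAux

namespace PsdDualAux

open Finset

variable {n d : ℕ}

lemma carath_step (hd : d ≠ 0) {s : ℕ} (hs : Ncard n d ≤ s)
    (a : Fin (s + 1) → Fin n → ℝ) :
    ∃ b : Fin s → Fin n → ℝ, ∑ k, Lmap n d (a k) = ∑ k, Lmap n d (b k) := by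
  set v : Fin (s + 1) → W n d := fun k => Lmap n d (a k) with hv
  have hdep : ¬ LinearIndependent ℝ v := by
    intro h
    have hle := h.fintype_card_le_finrank
    rw [Module.finrank_pi] at hle
    simp only [Fintype.card_fin] at hle
    rw [show Fintype.card {k // k ∈ T n d} = Ncard n d from by rw [Ncard]] at hle
    omega
  obtain ⟨g, hg0, i₀, hi₀⟩ := Fintype.not_linearIndependent_iff.mp hdep
  -- get a coefficient vector with a positive entry
  obtain ⟨g, hg0, i₀, hi₀⟩ : ∃ g : Fin (s+1) → ℝ, ∑ i, g i • v i = 0 ∧ ∃ i, 0 < g i := by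
    rcases lt_or_ge 0 (g i₀) with h | h
    · exact ⟨g, hg0, i₀, h⟩
    · refine ⟨-g, ?_, i₀, ?_⟩
      · simp only [Pi.neg_apply, neg_smul, Finset.sum_neg_distrib, hg0, neg_zero]
      · simp only [Pi.neg_apply, neg_pos]
        exact lt_of_le_of_ne h hi₀
  obtain ⟨k₀, -, hk₀⟩ := Finset.exists_max_image Finset.univ g ⟨i₀, Finset.mem_univ i₀⟩
  have hgk₀ : 0 < g k₀ := lt_of_lt_of_le hi₀ (hk₀ i₀ (Finset.mem_univ i₀))
  set lam : Fin (s + 1) → ℝ := fun k => 1 - (g k₀)⁻¹ * g k with hlam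
  have hlam_nonneg : ∀ k, 0 ≤ lam k := by
    intro k
    have : (g k₀)⁻¹ * g k ≤ (g k₀)⁻¹ * g k₀ :=
      mul_le_mul_of_nonneg_left (hk₀ k (Finset.mem_univ k)) (inv_nonneg.mpr hgk₀.le)
    rw [inv_mul_cancel₀ hgk₀.ne'] at this
    simp [hlam]; linarith
  have hlam_k₀ : lam k₀ = 0 := by simp [hlam, inv_mul_cancel₀ hgk₀.ne']
  have hsum : ∑ k, lam k • v k = ∑ k, v k := by
    have : ∑ k, lam k • v k = ∑ k, v k - (g k₀)⁻¹ • ∑ k, g k • v k := by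
      rw [Finset.smul_sum, ← Finset.sum_sub_distrib]
      apply Finset.sum_congr rfl
      intro k _
      rw [hlam]
      rw [sub_smul, one_smul, smul_smul]
    rw [this, hg0, smul_zero, sub_zero]
  set b : Fin s → Fin n → ℝ :=
    fun i => ((lam (k₀.succAbove i)) ^ ((d : ℝ)⁻¹)) • a (k₀.succAbove i) with hb
  refine ⟨b, ?_⟩
  have hterm : ∀ i : Fin s, Lmap n d (b i) = lam (k₀.succAbove i) • v (k₀.succAbove i) := by
    intro i
    rw [hb, Lmap_smul, Real.rpow_inv_natCast_pow (hlam_nonneg _) hd]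
  calc ∑ k, v k = ∑ k, lam k • v k := hsum.symm
    _ = lam k₀ • v k₀ + ∑ i : Fin s, lam (k₀.succAbove i) • v (k₀.succAbove i) :=
        Fin.sum_univ_succAbove _ k₀
    _ = ∑ i : Fin s, Lmap n d (b i) := by
        rw [hlam_k₀, zero_smul, zero_add]
        exact (Finset.sum_congr rfl fun i _ => (hterm i)).symm

lemma carath_aux (hd : d ≠ 0) :
    ∀ m s : ℕ, s ≤ Ncard n d + m → ∀ a : Fin s → Fin n → ℝ,
    ∃ b : Fin (Ncard n d) → Fin n → ℝ,
      ∑ k, Lmap n d (a k) = ∑ k, Lmap n d (b k) := by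
  set N := Ncard n d with hN
  intro m
  induction m with
  | zero =>
    intro s hs a
    simp only [Nat.add_zero] at hs
    refine ⟨fun k => if h : (k : ℕ) < s then a ⟨k, h⟩ else 0, ?_⟩
    set F : ℕ → W n d := fun m => if h : m < s then Lmap n d (a ⟨m, h⟩) else 0 with hF
    calc ∑ k : Fin s, Lmap n d (a k)
        = ∑ k : Fin s, F k := by
          apply Finset.sum_congr rfl; intro k _
          show Lmap n d (a k) = if h : (k : ℕ) < s then Lmap n d (a ⟨k, h⟩) else 0
          rw [dif_pos k.2]
      _ = ∑ m ∈ Finset.range s, F m := Fin.sum_univ_eq_sum_range F s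
      _ = ∑ m ∈ Finset.range N, F m := by
          apply Finset.sum_subset (Finset.range_subset_range.mpr hs)
          intro m _ hm
          rw [Finset.mem_range] at hm
          show (if h : m < s then Lmap n d (a ⟨m, h⟩) else 0) = 0
          rw [dif_neg hm]
      _ = ∑ k : Fin N, F k := (Fin.sum_univ_eq_sum_range F N).symm
      _ = ∑ k : Fin N, Lmap n d (if h : (k : ℕ) < s then a ⟨k, h⟩ else 0) := by
          apply Finset.sum_congr rfl; intro k _
          show (if h : (k : ℕ) < s then Lmap n d (a ⟨k, h⟩) else 0)
              = Lmap n d (if h : (k : ℕ) < s then a ⟨k, h⟩ else 0)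
          by_cases h : (k : ℕ) < s
          · rw [dif_pos h, dif_pos h]
          · rw [dif_neg h, dif_neg h, Lmap_zero hd]
  | succ m ih =>
    intro s hs a
    rcases le_or_gt s (N + m) with h | h
    · exact ih s h a
    · have hs1 : s = N + m + 1 := by omega
      subst hs1
      obtain ⟨b', hb'⟩ := carath_step hd (by omega) a
      obtain ⟨b, hb⟩ := ih (N + m) le_rfl b'
      exact ⟨b, hb'.trans hb⟩

end PsdDualAux

namespace PsdDualAux

open Finset Filter

variable {n d : ℕ}

variable (n d) in
noncomputable def Phi (b : Fin (Ncard n d) → Fin n → ℝ) : W n d :=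
  ∑ k, Lmap n d (b k)

lemma continuous_Lmap : Continuous (Lmap n d) := by
  apply continuous_pi
  intro k
  exact continuous_const.mul (continuous_finset_prod _ fun j _ => (continuous_apply j).pow _)

lemma continuous_Phi : Continuous (Phi n d) := by
  apply continuous_finset_sum
  intro k _
  exact continuous_Lmap.comp (continuous_apply k)

lemma Phi_smul (c : ℝ) (b : Fin (Ncard n d) → Fin n → ℝ) :
    Phi n d (c • b) = c ^ d • Phi n d b := by
  rw [Phi, Phi, Finset.smul_sum]
  exact Finset.sum_congr rfl fun k _ => Lmap_smul c (b k)

lemma Scone_eq_range_Phi (hd : d ≠ 0) : Scone n d = Set.range (Phi n d) := by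
  ext w
  constructor
  · rintro ⟨s, a, rfl⟩
    obtain ⟨b, hb⟩ := carath_aux hd s s (by omega) a
    exact ⟨b, hb.symm⟩
  · rintro ⟨b, rfl⟩
    exact ⟨_, b, rfl⟩

lemma Phi_eq_zero (hd : d ≠ 0) (hde : Even d)
    {b : Fin (Ncard n d) → Fin n → ℝ} (hb : Phi n d b = 0) : b = 0 := by
  set p : MvPolynomial (Fin n) ℝ := ∑ k, linForm (b k) ^ d with hp
  have hphom : p.IsHomogeneous d :=
    MvPolynomial.IsHomogeneous.sum _ _ _ (fun k _ => isHomogeneous_linForm_pow (b k))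
  have htW : toW d p = Phi n d b := by
    rw [hp, toW_sum]
    exact Finset.sum_congr rfl fun k _ => toW_linForm_pow (b k)
  have hp0 : p = 0 := by
    rw [← ofW_toW hphom, htW, hb]
    simp [ofW]
  have heval : ∀ u : Fin n → ℝ, ∀ k, MvPolynomial.eval u (linForm (b k)) ^ d = 0 := by
    intro u k
    have h0 : MvPolynomial.eval u p = 0 := by rw [hp0]; simp
    rw [hp, map_sum] at h0
    simp only [map_pow] at h0
    have := (Finset.sum_eq_zero_iff_of_nonneg
      (fun k _ => hde.pow_nonneg (MvPolynomial.eval u (linForm (b k))))).mp h0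
    exact this k (Finset.mem_univ k)
  funext k j
  have hzero : ∀ u : Fin n → ℝ, MvPolynomial.eval u (linForm (b k)) = 0 := by
    intro u
    exact pow_eq_zero_iff hd |>.mp (heval u k)
  have hself := hzero (b k)
  have hevallin : ∀ u : Fin n → ℝ, MvPolynomial.eval u (linForm (b k)) = ∑ j, b k j * u j := by
    intro u
    simp [linForm]
  rw [hevallin] at hself
  have : ∀ j', b k j' * b k j' = 0 := by
    intro j'
    have := (Finset.sum_eq_zero_iff_of_nonneg (fun j' _ => mul_self_nonneg (b k j'))).mp hself
    exact this j' (Finset.mem_univ j')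
  have := mul_self_eq_zero.mp (this j)
  simp [this]

/-- The cone over a compact set avoiding the origin is closed. -/
lemma isClosed_smul_cone {E : Type*} [NormedAddCommGroup E] [NormedSpace ℝ E] {K : Set E}
    (hK : IsCompact K) (h0 : (0 : E) ∉ K) :
    IsClosed {w : E | ∃ t : ℝ, 0 ≤ t ∧ ∃ x ∈ K, w = t • x} := by
  rcases K.eq_empty_or_nonempty with rfl | hne
  · simp
  obtain ⟨x₀, hx₀K, hx₀min⟩ := hK.exists_isMinOn hne continuous_norm.continuousOn
  have hε : 0 < ‖x₀‖ := norm_pos_iff.mpr (fun h => h0 (h ▸ hx₀K))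
  set ε := ‖x₀‖
  apply IsSeqClosed.isClosed
  intro y p hy hyp
  choose t ht x hx hyx using hy
  obtain ⟨B, hB⟩ : ∃ B, ∀ m, ‖y m‖ ≤ B := by
    obtain ⟨B, hB⟩ := hyp.norm.bddAbove_range
    exact ⟨B, fun m => hB ⟨m, rfl⟩⟩
  have htB : ∀ m, t m ≤ B / ε := by
    intro m
    rw [le_div_iff₀ hε]
    calc t m * ε ≤ t m * ‖x m‖ :=
          mul_le_mul_of_nonneg_left (hx₀min (hx m)) (ht m)
      _ = ‖y m‖ := by rw [hyx m, norm_smul, Real.norm_eq_abs, abs_of_nonneg (ht m)]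
      _ ≤ B := hB m
  have hz : ∀ m, (t m, x m) ∈ Set.Icc (0:ℝ) (B / ε) ×ˢ K :=
    fun m => ⟨⟨ht m, htB m⟩, hx m⟩
  obtain ⟨⟨t₀, z₀⟩, hmem, φ, hφ, hlim⟩ := ((isCompact_Icc).prod hK).tendsto_subseq hz
  have hlim2 : Tendsto (fun i => t (φ i) • x (φ i)) atTop (nhds (t₀ • z₀)) := by
    have hcont : Continuous (fun q : ℝ × E => q.1 • q.2) := continuous_smul
    exact (hcont.tendsto (t₀, z₀)).comp hlim
  have hlim3 : Tendsto (fun i => y (φ i)) atTop (nhds p) := hyp.comp hφ.tendsto_atTop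
  have hyeq : (fun i => y (φ i)) = fun i => t (φ i) • x (φ i) := funext fun i => hyx (φ i)
  rw [hyeq] at hlim3
  have : p = t₀ • z₀ := tendsto_nhds_unique hlim3 hlim2
  exact ⟨t₀, hmem.1.1, z₀, hmem.2, this⟩

set_option maxHeartbeats 1600000 in
lemma isClosed_Scone (hd : d ≠ 0) (hde : Even d) : IsClosed (Scone n d) := by
  by_cases hex : ∃ b : Fin (Ncard n d) → Fin n → ℝ, b ≠ 0
  · obtain ⟨b₀, hb₀⟩ := hex
    set K := Phi n d '' Metric.sphere 0 1 with hK
    have hKc : IsCompact K := (isCompact_sphere 0 1).image continuous_Phi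
    have h0K : (0 : W n d) ∉ K := by
      rintro ⟨u, hu, hu0⟩
      rw [Phi_eq_zero hd hde hu0, mem_sphere_zero_iff_norm, norm_zero] at hu
      exact one_ne_zero hu.symm
    have : Scone n d = {w : W n d | ∃ t : ℝ, 0 ≤ t ∧ ∃ x ∈ K, w = t • x} := by
      ext w
      constructor
      · intro hw
        rw [Scone_eq_range_Phi hd] at hw
        obtain ⟨b, rfl⟩ := hw
        by_cases hb : b = 0
        · refine ⟨0, le_rfl, Phi n d (‖b₀‖⁻¹ • b₀), ⟨_, ?_, rfl⟩, ?_⟩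
          · rw [mem_sphere_zero_iff_norm]
            exact norm_smul_inv_norm hb₀
          · rw [hb, zero_smul]
            rw [Phi, Finset.sum_congr rfl fun k _ => by rw [Pi.zero_apply, Lmap_zero hd]]
            simp
        · refine ⟨‖b‖ ^ d, by positivity, Phi n d (‖b‖⁻¹ • b), ⟨_, ?_, rfl⟩, ?_⟩
          · rw [mem_sphere_zero_iff_norm]
            exact norm_smul_inv_norm hb
          · rw [← Phi_smul, smul_inv_smul₀ (norm_ne_zero_iff.mpr hb)]
      · rintro ⟨t, ht, x, ⟨u, hu, rfl⟩, rfl⟩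
        have : Phi n d u ∈ Scone n d := by
          rw [Scone_eq_range_Phi hd]; exact ⟨u, rfl⟩
        exact Scone_smul ht hd this
    rw [this]
    exact isClosed_smul_cone hKc h0K
  · push_neg at hex
    have : Scone n d = {0} := by
      ext w
      constructor
      · intro hw
        rw [Scone_eq_range_Phi hd] at hw
        obtain ⟨b, rfl⟩ := hw
        rw [hex b]
        rw [Phi, Finset.sum_congr rfl fun k _ => by rw [Pi.zero_apply, Lmap_zero hd]]
        simp
      · rintro rfl
        exact Scone_zero
    rw [this]
    exact isClosed_singleton
end PsdDualAux

namespace PsdDualAux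

open Finset Filter

variable {n d : ℕ}

lemma formInner_dual (f : W n d →ₗ[ℝ] ℝ) {g : MvPolynomial (Fin n) ℝ}
    (hg : g.IsHomogeneous d) :
    formInner g (ofW (fun k => (Nat.multinomial Finset.univ k.1 : ℝ) * f (Pi.single k 1)))
      = f (toW d g) := by
  classical
  rw [formInner_eq hg (isHomogeneous_ofW _), toW_ofW]
  have : ∀ k : {k // k ∈ T n d},
      toW d g k * ((Nat.multinomial Finset.univ k.1 : ℝ) * f (Pi.single k 1)) /
        (Nat.multinomial Finset.univ k.1 : ℝ) = f (toW d g k • (Pi.single k 1 : W n d)) := by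
    intro k
    rw [map_smul, smul_eq_mul]
    have hc := multinomial_ne_zero (n := n) k.1
    field_simp
  rw [Finset.sum_congr rfl (fun k _ => this k), ← map_sum]
  congr 1
  funext j
  rw [Finset.sum_apply]
  simp [Pi.single_apply]


theorem psd_sumPow_dual' (hd : d ≠ 0) (hde : Even d) :
    (∀ q : MvPolynomial (Fin n) ℝ,
      (q.IsHomogeneous d ∧ ∀ p ∈ SumPow n d, 0 ≤ formInner p q) ↔ q ∈ Psd n d) ∧
    (∀ p : MvPolynomial (Fin n) ℝ,
      (p.IsHomogeneous d ∧ ∀ q ∈ Psd n d, 0 ≤ formInner p q) ↔ p ∈ SumPow n d) := by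
  have key : ∀ (s : ℕ) (a : Fin s → Fin n → ℝ) (q : MvPolynomial (Fin n) ℝ),
      q.IsHomogeneous d →
      formInner (∑ k, linForm (a k) ^ d) q = ∑ k, MvPolynomial.eval (a k) q := by
    intro s a q hq
    rw [formInner_sum_left _ _ (fun k _ => isHomogeneous_linForm_pow (a k)) hq]
    exact Finset.sum_congr rfl fun k _ => formInner_linForm_pow hq (a k)
  constructor
  · intro q
    constructor
    · rintro ⟨hq, hdual⟩
      refine ⟨hq, fun u => ?_⟩
      have hmem : (linForm u) ^ d ∈ SumPow n d :=
        ⟨1, fun _ => u, by rw [Fin.sum_univ_one]⟩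
      have := hdual _ hmem
      rwa [formInner_linForm_pow hq u] at this
    · rintro ⟨hq, hpos⟩
      refine ⟨hq, ?_⟩
      rintro p ⟨s, a, rfl⟩
      rw [key s a q hq]
      exact Finset.sum_nonneg fun k _ => hpos (a k)
  · intro p
    constructor
    · rintro ⟨hp, hdual⟩
      by_contra hnot
      have htW : toW d p ∉ Scone n d := by
        intro hmem
        obtain ⟨s, a, heq⟩ := hmem
        apply hnot
        have h2 : toW d (∑ k, linForm (a k) ^ d) = ∑ k, Lmap n d (a k) := by
          rw [toW_sum]; exact Finset.sum_congr rfl fun k _ => toW_linForm_pow (a k)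
        have hp' : (∑ k, linForm (a k) ^ d).IsHomogeneous d :=
          MvPolynomial.IsHomogeneous.sum _ _ _ fun k _ => isHomogeneous_linForm_pow (a k)
        have hpe : p = ∑ k, linForm (a k) ^ d := by
          rw [← ofW_toW hp, ← ofW_toW hp', h2, ← heq]
        exact hpe ▸ ⟨s, a, rfl⟩
      obtain ⟨f, u, hfu, hup⟩ := geometric_hahn_banach_closed_point
        (convex_Scone hd) (isClosed_Scone hd hde) htW
      have hu0 : 0 < u := by simpa using hfu 0 Scone_zero
      have hfle : ∀ w ∈ Scone n d, f w ≤ 0 := by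
        intro w hw
        by_contra hfw
        push_neg at hfw
        have ht : (0:ℝ) ≤ u / f w := le_of_lt (div_pos hu0 hfw)
        have h3 := hfu _ (Scone_smul ht hd hw)
        rw [map_smul, smul_eq_mul, div_mul_cancel₀ _ (ne_of_gt hfw)] at h3
        exact lt_irrefl u h3
      set q := ofW (fun k => (Nat.multinomial Finset.univ k.1 : ℝ) *
        (-(f : W n d →ₗ[ℝ] ℝ)) (Pi.single k 1)) with hqdef
      have hq : q.IsHomogeneous d := isHomogeneous_ofW _
      have hqpsd : q ∈ Psd n d := by
        refine ⟨hq, fun v => ?_⟩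
        have h1 : MvPolynomial.eval v q = formInner (linForm v ^ d) q :=
          (formInner_linForm_pow hq v).symm
        rw [h1, hqdef, formInner_dual (-(f : W n d →ₗ[ℝ] ℝ)) (isHomogeneous_linForm_pow v),
          toW_linForm_pow]
        have h4 := hfle _ (Lmap_mem_Scone (d := d) v)
        simp only [LinearMap.neg_apply, ContinuousLinearMap.coe_coe]
        linarith
      have hcontr := hdual q hqpsd
      rw [hqdef, formInner_dual (-(f : W n d →ₗ[ℝ] ℝ)) hp] at hcontr
      simp only [LinearMap.neg_apply, ContinuousLinearMap.coe_coe] at hcontr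
      linarith
    · rintro ⟨s, a, rfl⟩
      refine ⟨MvPolynomial.IsHomogeneous.sum _ _ _ fun k _ => isHomogeneous_linForm_pow (a k), ?_⟩
      rintro q ⟨hq, hqpos⟩
      rw [key s a q hq]
      exact Finset.sum_nonneg fun k _ => hqpos (a k)

end PsdDualAux

/-- `P_{n,2r}` and `Q_{n,2r}` are dual cones with respect to the inner product `[·,·]`. -/
theorem psd_sumPow_dual (n r : ℕ) (hr : 0 < r) :
    (∀ q : MvPolynomial (Fin n) ℝ,
      (q.IsHomogeneous (2 * r) ∧ ∀ p ∈ SumPow n (2 * r), 0 ≤ formInner p q) ↔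
        q ∈ Psd n (2 * r)) ∧
    (∀ p : MvPolynomial (Fin n) ℝ,
      (p.IsHomogeneous (2 * r) ∧ ∀ q ∈ Psd n (2 * r), 0 ≤ formInner p q) ↔
        p ∈ SumPow n (2 * r)) :=
  PsdDualAux.psd_sumPow_dual' (by omega) (even_two_mul r)
end

section
/- Let v₁,…,v_m be positive integers with v₁ + ⋯ + v_m = r, and let W = {p ∈ F_{2,2r} : p = Σ_{k=1}^s ℓ_{k,1}^{2v₁} ⋯ ℓ_{k,m}^{2v_m} for some s ∈ ℕ and real linear binary forms ℓ_{k,i}}. Then W = P_{2,2r} if and only if m = r (equivalently, every v_i = 1). In particular: every psd binary form of degree 2r is a finite sum of products ℓ₁²⋯ℓ_r² of squares of r real linear forms; and if m < r, then the psd form Π_{j=1}^r (x − jy)² does not belong to W. -/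
open MvPolynomial Filter

/-- The cone of finite sums of products `ℓ₁^{2v₁} ⋯ ℓ_m^{2v_m}` of even powers of real
linear binary forms. -/
def WaringProdCone (m : ℕ) (v : Fin m → ℕ) : Set (MvPolynomial (Fin 2) ℝ) :=
  {p | ∃ (s : ℕ) (a : Fin s → Fin m → Fin 2 → ℝ),
    p = ∑ k, ∏ i, (linForm (a k i)) ^ (2 * v i)}


/-! ### Auxiliary: univariate representation -/

section Univariate
open Filter

/-- Sums of nonneg constants times products of `n` squares of linear polynomials. -/
def SqRep (n : ℕ) (f : Polynomial ℝ) : Prop :=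
  ∃ (s : ℕ) (c : Fin s → ℝ) (a b : Fin s → Fin n → ℝ), (∀ k, 0 ≤ c k) ∧
    f = ∑ k, Polynomial.C (c k) * ∏ i, (Polynomial.C (a k i) * Polynomial.X
      + Polynomial.C (b k i)) ^ 2

lemma sqrep_C {c : ℝ} (hc : 0 ≤ c) (n : ℕ) : SqRep n (Polynomial.C c) :=
  ⟨1, fun _ => c, fun _ _ => 0, fun _ _ => 1, fun _ => hc, by simp⟩

lemma sqrep_succ {n : ℕ} {f : Polynomial ℝ} (h : SqRep n f) : SqRep (n + 1) f := by
  obtain ⟨s, c, a, b, hc, rfl⟩ := h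
  exact ⟨s, c, fun k => Fin.cons 0 (a k), fun k => Fin.cons 1 (b k), hc, by
    simp [Fin.prod_univ_succ]⟩

lemma sqrep_add {n : ℕ} {f g : Polynomial ℝ} (hf : SqRep n f) (hg : SqRep n g) : SqRep n (f + g) := by
  obtain ⟨s, c, a, b, hc, rfl⟩ := hf
  obtain ⟨t, d, e, e', hd, rfl⟩ := hg
  refine ⟨s + t, Fin.append c d, Fin.append a e, Fin.append b e', ?_, ?_⟩
  · intro k
    refine Fin.addCases (fun i => ?_) (fun i => ?_) k <;> simp [hc, hd]
  · rw [Fin.sum_univ_add]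
    simp only [Fin.append_left, Fin.append_right]

lemma sqrep_smul {n : ℕ} {f : Polynomial ℝ} {c : ℝ} (hc : 0 ≤ c) (h : SqRep n f) :
    SqRep n (Polynomial.C c * f) := by
  obtain ⟨s, d, a, b, hd, rfl⟩ := h
  refine ⟨s, fun k => c * d k, a, b, fun k => mul_nonneg hc (hd k), ?_⟩
  rw [Finset.mul_sum]
  apply Finset.sum_congr rfl
  intro k _
  rw [map_mul, mul_assoc]

lemma sqrep_mul_sq {n : ℕ} {f : Polynomial ℝ} (α β : ℝ) (h : SqRep n f) :
    SqRep (n + 1) ((Polynomial.C α * Polynomial.X + Polynomial.C β) ^ 2 * f) := by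
  obtain ⟨s, c, a, b, hc, rfl⟩ := h
  refine ⟨s, c, fun k => Fin.cons α (a k), fun k => Fin.cons β (b k), hc, ?_⟩
  rw [Finset.mul_sum]
  apply Finset.sum_congr rfl
  intro k _
  rw [Fin.prod_univ_succ]
  simp only [Fin.cons_zero, Fin.cons_succ]
  ring

lemma quot_nonneg {q h : Polynomial ℝ} (t₀ : ℝ)
    (hq : ∀ t, t ≠ t₀ → 0 < q.eval t)
    (hf : ∀ t, 0 ≤ (q * h).eval t) : ∀ t, 0 ≤ h.eval t := by
  have key : ∀ t, t ≠ t₀ → 0 ≤ h.eval t := by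
    intro t ht
    have := hf t
    rw [Polynomial.eval_mul] at this
    exact nonneg_of_mul_nonneg_right this (hq t ht)
  intro t
  by_cases ht : t = t₀
  · subst ht
    have hcont : Tendsto (fun x => h.eval x) (nhdsWithin t {t}ᶜ) (nhds (h.eval t)) :=
      ((h.continuous.tendsto t).mono_left nhdsWithin_le_nhds)
    refine ge_of_tendsto hcont ?_
    filter_upwards [self_mem_nhdsWithin] with x hx
    exact key x hx
  · exact key t ht

lemma sq_dvd_of_root {f : Polynomial ℝ} (hf : ∀ t, 0 ≤ f.eval t) {t₀ : ℝ} (h0 : f.eval t₀ = 0) :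
    (Polynomial.X - Polynomial.C t₀) ^ 2 ∣ f := by
  obtain ⟨g, rfl⟩ : (Polynomial.X - Polynomial.C t₀) ∣ f := Polynomial.dvd_iff_isRoot.2 h0
  suffices hg : g.eval t₀ = 0 by
    obtain ⟨h, rfl⟩ : (Polynomial.X - Polynomial.C t₀) ∣ g := Polynomial.dvd_iff_isRoot.2 hg
    exact ⟨h, by ring⟩
  by_contra hne
  rcases lt_or_gt_of_ne hne with hneg | hpos
  · have hev : ∀ᶠ t in nhdsWithin t₀ (Set.Ioi t₀), Polynomial.eval t g < 0 :=
      ((g.continuous.tendsto t₀).eventually (eventually_lt_nhds hneg)).filter_mono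
        nhdsWithin_le_nhds
    obtain ⟨t, hgt, ht⟩ := (hev.and self_mem_nhdsWithin).exists
    have : ((Polynomial.X - Polynomial.C t₀) * g).eval t < 0 := by
      rw [Polynomial.eval_mul, Polynomial.eval_sub, Polynomial.eval_X, Polynomial.eval_C]
      exact mul_neg_of_pos_of_neg (sub_pos.2 ht) hgt
    exact absurd (hf t) (not_le.2 this)
  · have hev : ∀ᶠ t in nhdsWithin t₀ (Set.Iio t₀), 0 < Polynomial.eval t g :=
      ((g.continuous.tendsto t₀).eventually (eventually_gt_nhds hpos)).filter_mono
        nhdsWithin_le_nhds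
    obtain ⟨t, hgt, ht⟩ := (hev.and self_mem_nhdsWithin).exists
    have : ((Polynomial.X - Polynomial.C t₀) * g).eval t < 0 := by
      rw [Polynomial.eval_mul, Polynomial.eval_sub, Polynomial.eval_X, Polynomial.eval_C]
      exact mul_neg_of_neg_of_pos (sub_neg.2 ht) hgt
    exact absurd (hf t) (not_le.2 this)

lemma map_quad (z : ℂ) :
    ((Polynomial.X - Polynomial.C z.re) ^ 2 + Polynomial.C (z.im ^ 2)).map (algebraMap ℝ ℂ)
      = (Polynomial.X - Polynomial.C z) * (Polynomial.X - Polynomial.C ((starRingEnd ℂ) z)) := by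
  have h1 : (Polynomial.X - Polynomial.C z) * (Polynomial.X - Polynomial.C ((starRingEnd ℂ) z))
      = Polynomial.X ^ 2 - Polynomial.C (z + (starRingEnd ℂ) z) * Polynomial.X
        + Polynomial.C (z * (starRingEnd ℂ) z) := by
    rw [map_add, map_mul]; ring
  rw [h1, Complex.add_conj, Complex.mul_conj]
  have h2 : ((Polynomial.X - Polynomial.C z.re) ^ 2 + Polynomial.C (z.im ^ 2)).map (algebraMap ℝ ℂ)
      = (Polynomial.X - Polynomial.C (z.re : ℂ)) ^ 2 + Polynomial.C ((z.im : ℂ) ^ 2) := by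
    simp [Polynomial.map_add, Polynomial.map_pow, Polynomial.map_sub]
  rw [h2]
  have h4 : ((Complex.normSq z : ℝ) : ℂ) = (z.re : ℂ) ^ 2 + (z.im : ℂ) ^ 2 := by
    rw [Complex.normSq_apply]; push_cast; ring
  rw [h4]
  have h3 : ((2 * z.re : ℝ) : ℂ) = 2 * (z.re : ℂ) := by push_cast; ring
  rw [h3]
  simp only [map_add, map_mul, map_pow, map_ofNat]
  ring

lemma conj_root {f : Polynomial ℝ} {z : ℂ} (hz : (f.map (algebraMap ℝ ℂ)).IsRoot z) :
    (f.map (algebraMap ℝ ℂ)).IsRoot ((starRingEnd ℂ) z) := by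
  have key : (f.map (algebraMap ℝ ℂ)).eval ((starRingEnd ℂ) z)
      = (starRingEnd ℂ) ((f.map (algebraMap ℝ ℂ)).eval z) := by
    rw [Polynomial.eval_map, Polynomial.eval_map, Polynomial.hom_eval₂]
    congr 1
    ext r
    simp [Complex.conj_ofReal]
  rw [Polynomial.IsRoot, key, hz.eq_zero, map_zero]

lemma quad_dvd {f : Polynomial ℝ} {z : ℂ} (him : z.im ≠ 0)
    (hz : (f.map (algebraMap ℝ ℂ)).IsRoot z) :
    ((Polynomial.X - Polynomial.C z.re) ^ 2 + Polynomial.C (z.im ^ 2)) ∣ f := by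
  rw [← Polynomial.map_dvd_map' (algebraMap ℝ ℂ), map_quad]
  have hne : z ≠ (starRingEnd ℂ) z := by
    intro h
    apply him
    have := congrArg Complex.im h
    simp at this
    linarith
  have hcop : IsCoprime (Polynomial.X - Polynomial.C z) (Polynomial.X - Polynomial.C ((starRingEnd ℂ) z)) :=
    Polynomial.isCoprime_X_sub_C_of_isUnit_sub ((sub_ne_zero.2 hne).isUnit)
  exact hcop.mul_dvd (Polynomial.dvd_iff_isRoot.2 hz) (Polynomial.dvd_iff_isRoot.2 (conj_root hz))

theorem sqrep_main : ∀ (n : ℕ) (f : Polynomial ℝ), f.natDegree ≤ 2 * n →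
    (∀ t, 0 ≤ f.eval t) → SqRep n f := by
  intro n
  induction n with
  | zero =>
    intro f hdeg hpos
    have hf : f = Polynomial.C (f.coeff 0) :=
      Polynomial.eq_C_of_natDegree_le_zero (by simpa using hdeg)
    rw [hf]
    exact sqrep_C (by simpa [Polynomial.coeff_zero_eq_eval_zero] using hpos 0) 0
  | succ n ih =>
    intro f hdeg hpos
    by_cases hd : f.natDegree ≤ 2 * n
    · exact sqrep_succ (ih f hd hpos)
    push_neg at hd
    have hf0 : f ≠ 0 := by
      intro h; rw [h] at hd; simp at hd
    have hdegpos : 0 < (f.map (algebraMap ℝ ℂ)).degree := by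
      rw [Polynomial.degree_map]
      exact Polynomial.natDegree_pos_iff_degree_pos.mp (by omega)
    obtain ⟨z, hz⟩ := Complex.exists_root hdegpos
    by_cases him : z.im = 0
    · -- real root t₀ = z.re
      have hroot : f.eval z.re = 0 := by
        have hzz : ((z.re : ℝ) : ℂ) = z := Complex.ext rfl (by simp [him])
        have hz' : (f.map (algebraMap ℝ ℂ)).eval (algebraMap ℝ ℂ z.re) = 0 := by
          rw [show algebraMap ℝ ℂ z.re = z from hzz]; exact hz
        rw [Polynomial.eval_map, Polynomial.eval₂_at_apply] at hz'
        exact_mod_cast (Complex.ofReal_eq_zero.mp hz')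
      obtain ⟨h, hh⟩ := sq_dvd_of_root hpos hroot
      have hq : ∀ t, t ≠ z.re → (0:ℝ) < ((Polynomial.X - Polynomial.C z.re) ^ 2).eval t := by
        intro t ht
        rw [Polynomial.eval_pow, Polynomial.eval_sub, Polynomial.eval_X, Polynomial.eval_C]
        have : t - z.re ≠ 0 := sub_ne_zero.2 ht
        positivity
      have hpos' : ∀ t, 0 ≤ (((Polynomial.X - Polynomial.C z.re) ^ 2) * h).eval t := by
        intro t; rw [← hh]; exact hpos t
      have hhn : ∀ t, 0 ≤ h.eval t := quot_nonneg z.re hq hpos'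
      have hh0 : h ≠ 0 := by
        intro h0; rw [h0, mul_zero] at hh; exact hf0 hh
      have hdegh : h.natDegree ≤ 2 * n := by
        have h2 : ((Polynomial.X - Polynomial.C z.re) ^ 2 : Polynomial ℝ).natDegree = 2 := by
          rw [Polynomial.natDegree_pow, Polynomial.natDegree_X_sub_C]
        have hne : ((Polynomial.X - Polynomial.C z.re) ^ 2 : Polynomial ℝ) ≠ 0 :=
          pow_ne_zero _ (Polynomial.X_sub_C_ne_zero _)
        have := Polynomial.natDegree_mul hne hh0
        rw [← hh, h2] at this
        omega
      have hrh := sqrep_mul_sq 1 (-z.re) (ih h hdegh hhn)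
      have : (Polynomial.C (1:ℝ) * Polynomial.X + Polynomial.C (-z.re)) ^ 2 * h = f := by
        rw [hh]; simp only [map_one, map_neg, one_mul]; ring
      rwa [this] at hrh
    · -- nonreal root
      obtain ⟨h, hh⟩ := quad_dvd him hz
      set q : Polynomial ℝ := (Polynomial.X - Polynomial.C z.re) ^ 2 + Polynomial.C (z.im ^ 2) with hqdef
      have hqpos : ∀ t, (0:ℝ) < q.eval t := by
        intro t
        rw [hqdef]
        simp only [Polynomial.eval_add, Polynomial.eval_pow, Polynomial.eval_sub, Polynomial.eval_X, Polynomial.eval_C]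
        positivity
      have hq : ∀ t, t ≠ 0 → (0:ℝ) < q.eval t := fun t _ => hqpos t
      have hpos' : ∀ t, 0 ≤ (q * h).eval t := by
        intro t; rw [← hh]; exact hpos t
      have hhn : ∀ t, 0 ≤ h.eval t := quot_nonneg 0 hq hpos'
      have hq0 : q ≠ 0 := fun h0 => absurd (h0 ▸ hqpos 0) (by simp)
      have hh0 : h ≠ 0 := by
        intro h0; rw [h0, mul_zero] at hh; exact hf0 hh
      have hdegq : q.natDegree = 2 := by
        rw [hqdef]
        rw [Polynomial.natDegree_add_C, Polynomial.natDegree_pow,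
          Polynomial.natDegree_X_sub_C]
      have hdegh : h.natDegree ≤ 2 * n := by
        have := Polynomial.natDegree_mul hq0 hh0
        rw [← hh, hdegq] at this
        omega
      have hrep := ih h hdegh hhn
      have : f = (Polynomial.C (1:ℝ) * Polynomial.X + Polynomial.C (-z.re)) ^ 2 * h
          + Polynomial.C (z.im ^ 2) * h := by
        rw [hh, hqdef]; simp only [map_one, map_neg, one_mul]; ring
      rw [this]
      exact sqrep_add (sqrep_mul_sq _ _ hrep)
        (sqrep_succ (sqrep_smul (by positivity) hrep))

lemma sqrep_clean {n : ℕ} (hn : 0 < n) {f : Polynomial ℝ} (h : SqRep n f) :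
    ∃ (s : ℕ) (a b : Fin s → Fin n → ℝ),
      f = ∑ k, ∏ i, (Polynomial.C (a k i) * Polynomial.X + Polynomial.C (b k i)) ^ 2 := by
  obtain ⟨n, rfl⟩ : ∃ n', n = n' + 1 := ⟨n - 1, by omega⟩
  obtain ⟨s, c, a, b, hc, rfl⟩ := h
  refine ⟨s, fun k => Fin.cons (Real.sqrt (c k) * a k 0) (Fin.tail (a k)),
    fun k => Fin.cons (Real.sqrt (c k) * b k 0) (Fin.tail (b k)), ?_⟩
  apply Finset.sum_congr rfl
  intro k _
  rw [Fin.prod_univ_succ, Fin.prod_univ_succ]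
  simp only [Fin.cons_zero, Fin.cons_succ, Fin.tail]
  have : Polynomial.C (Real.sqrt (c k) * a k 0) * Polynomial.X + Polynomial.C (Real.sqrt (c k) * b k 0)
      = Polynomial.C (Real.sqrt (c k)) * (Polynomial.C (a k 0) * Polynomial.X + Polynomial.C (b k 0)) := by
    simp only [map_mul]; ring
  rw [this, mul_pow, ← map_pow, Real.sq_sqrt (hc k), ← mul_assoc]

end Univariate

/-! ### Auxiliary: homogenization bridge -/

section Bridge

lemma eval_aeval_poly {n : ℕ} (g : Fin n → Polynomial ℝ) (t : ℝ)
    (p : MvPolynomial (Fin n) ℝ) :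
    (MvPolynomial.aeval g p).eval t = MvPolynomial.eval (fun j => (g j).eval t) p := by
  induction p using MvPolynomial.induction_on with
  | C a => simp
  | add p q hp hq => simp [hp, hq]
  | mul_X p j hp => simp [hp]

/-- Dehomogenization of a binary form: `p(x, 1)`. -/
noncomputable def dehom (p : MvPolynomial (Fin 2) ℝ) : Polynomial ℝ :=
  MvPolynomial.aeval ![Polynomial.X, 1] p

lemma eval_dehom (p : MvPolynomial (Fin 2) ℝ) (t : ℝ) :
    (dehom p).eval t = MvPolynomial.eval ![t, 1] p := by
  rw [dehom, eval_aeval_poly]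
  have : (fun j => Polynomial.eval t (![Polynomial.X, 1] j)) = ![t, 1] := by
    funext j; fin_cases j <;> simp
  rw [this]

lemma natDegree_dehom (p : MvPolynomial (Fin 2) ℝ) :
    (dehom p).natDegree ≤ p.totalDegree := by
  rw [dehom]
  conv_lhs => rw [p.as_sum]
  rw [map_sum]
  apply Polynomial.natDegree_sum_le_of_forall_le
  intro u hu
  rw [MvPolynomial.aeval_monomial]
  refine le_trans (Polynomial.natDegree_mul_le) ?_
  have h1 : (algebraMap ℝ (Polynomial ℝ) (MvPolynomial.coeff u p)).natDegree = 0 := by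
    simp [Polynomial.natDegree_C]
  rw [h1, zero_add]
  refine le_trans ?_ (MvPolynomial.le_totalDegree hu)
  rw [Finsupp.prod]
  refine le_trans (Polynomial.natDegree_prod_le u.support
    (fun j => (![Polynomial.X, 1] j) ^ (u j))) ?_
  have : ∀ j ∈ u.support, ((![(Polynomial.X : Polynomial ℝ), 1] j) ^ (u j)).natDegree ≤ u j := by
    intro j _
    fin_cases j
    · simp [Polynomial.natDegree_X_pow]
    · simp
  refine le_trans (Finset.sum_le_sum this) ?_
  rw [Finsupp.sum]

lemma eval_smul_homog {n d : ℕ} {p : MvPolynomial (Fin n) ℝ} (hp : p.IsHomogeneous d)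
    (c : ℝ) (u : Fin n → ℝ) :
    MvPolynomial.eval (fun j => c * u j) p = c ^ d * MvPolynomial.eval u p := by
  conv_lhs => rw [p.as_sum]
  conv_rhs => rw [p.as_sum]
  rw [map_sum, map_sum, Finset.mul_sum]
  apply Finset.sum_congr rfl
  intro v hv
  rw [MvPolynomial.eval_monomial, MvPolynomial.eval_monomial]
  have hdeg : v.degree = d := by
    have := hp (MvPolynomial.mem_support_iff.mp hv)
    rw [Finsupp.degree_eq_weight_one]
    exact this
  rw [Finsupp.prod, Finsupp.prod]
  have h5 : ∏ j ∈ v.support, (c * u j) ^ v j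
      = (∏ j ∈ v.support, c ^ v j) * ∏ j ∈ v.support, (u j) ^ v j := by
    rw [← Finset.prod_mul_distrib]
    exact Finset.prod_congr rfl fun j _ => mul_pow _ _ _
  rw [h5, Finset.prod_pow_eq_pow_sum]
  have h6 : ∑ j ∈ v.support, v j = d := hdeg
  rw [h6]
  ring

lemma eq_of_dehom_eq {d : ℕ} {p q : MvPolynomial (Fin 2) ℝ}
    (hp : p.IsHomogeneous d) (hq : q.IsHomogeneous d)
    (h : dehom p = dehom q) : p = q := by
  have h1 : ∀ u : Fin 2 → ℝ, u 1 ≠ 0 → MvPolynomial.eval u p = MvPolynomial.eval u q := by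
    intro u hu
    have hrw : (fun j => u 1 * (![u 0 / u 1, 1]) j) = u := by
      funext j
      fin_cases j
      · simp [mul_div_cancel₀ _ hu]
      · simp
    have ep := eval_smul_homog hp (u 1) ![u 0 / u 1, 1]
    have eq' := eval_smul_homog hq (u 1) ![u 0 / u 1, 1]
    rw [hrw] at ep eq'
    rw [ep, eq', ← eval_dehom, ← eval_dehom, h]
  apply MvPolynomial.funext
  intro u
  by_cases hu : u 1 = 0
  · set G : Polynomial ℝ :=
      MvPolynomial.aeval ![Polynomial.C (u 0), Polynomial.X] (p - q) with hG
    have hGroot : ∀ t : ℝ, t ≠ 0 → G.IsRoot t := by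
      intro t ht
      have h7 : (fun j => Polynomial.eval t (![Polynomial.C (u 0), Polynomial.X] j))
          = ![u 0, t] := by
        funext j; fin_cases j <;> simp
      rw [Polynomial.IsRoot, hG, eval_aeval_poly, h7, map_sub, sub_eq_zero]
      exact h1 ![u 0, t] (by simpa using ht)
    have hGzero : G = 0 := by
      apply Polynomial.eq_zero_of_infinite_isRoot
      refine Set.Infinite.mono ?_ (Set.Finite.infinite_compl (Set.finite_singleton (0:ℝ)))
      intro t ht
      exact hGroot t ht
    have h0 : G.eval 0 = 0 := by rw [hGzero]; simp
    have h8 : (fun j => Polynomial.eval 0 (![Polynomial.C (u 0), Polynomial.X] j))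
        = u := by
      funext j; fin_cases j <;> simp [hu.symm]
    rw [hG, eval_aeval_poly, h8, map_sub, sub_eq_zero] at h0
    exact h0
  · exact h1 u hu

end Bridge

-- small helpers
lemma linForm_isHomogeneous {n : ℕ} (a : Fin n → ℝ) : (linForm a).IsHomogeneous 1 :=
  IsHomogeneous.sum _ _ _ (fun j _ => isHomogeneous_C_mul_X _ _)

lemma eval_linForm {n : ℕ} (a u : Fin n → ℝ) : eval u (linForm a) = ∑ j, a j * u j := by
  simp [linForm]

lemma waring_subset_psd (m r : ℕ) (v : Fin m → ℕ) (hsum : ∑ i, v i = r) :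
    WaringProdCone m v ⊆ Psd 2 (2 * r) := by
  rintro p ⟨s, a, rfl⟩
  constructor
  · apply IsHomogeneous.sum
    intro k _
    have := IsHomogeneous.prod Finset.univ
      (fun i => (linForm (a k i)) ^ (2 * v i)) (fun i => 2 * v i)
      (fun i _ => by simpa using (linForm_isHomogeneous (a k i)).pow (2 * v i))
    rwa [← Finset.mul_sum, hsum] at this
  · intro u
    rw [map_sum]
    apply Finset.sum_nonneg
    intro k _
    rw [map_prod]
    apply Finset.prod_nonneg
    intro i _
    rw [map_pow]
    exact (even_two_mul (v i)).pow_nonneg _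

lemma not_in_waring (m r : ℕ) (v : Fin m → ℕ) (hv : ∀ i, 0 < v i) (hmr : m < r) :
    (∏ j : Fin r, (X 0 - MvPolynomial.C ((j : ℕ) + 1 : ℝ) * X 1) ^ 2) ∉
      WaringProdCone m v := by
  rintro ⟨s, a, hrep⟩
  -- each term vanishes at each of the r points (j+1, 1)
  have hterm0 : ∀ k : Fin s, (∏ i, (linForm (a k i)) ^ (2 * v i)) = 0 := by
    intro k
    -- for each j, some linear factor vanishes at (j+1,1)
    have hvan : ∀ j : Fin r, ∃ i : Fin m,
        eval ![((j : ℕ) + 1 : ℝ), 1] (linForm (a k i)) = 0 := by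
      intro j
      have hP0 : eval ![((j : ℕ) + 1 : ℝ), 1]
          (∏ j' : Fin r, (X 0 - MvPolynomial.C ((j' : ℕ) + 1 : ℝ) * X 1) ^ 2) = 0 := by
        rw [map_prod]
        apply Finset.prod_eq_zero (Finset.mem_univ j)
        simp
      rw [hrep, map_sum] at hP0
      have hnn : ∀ k' ∈ Finset.univ, (0:ℝ) ≤
          eval ![((j : ℕ) + 1 : ℝ), 1] (∏ i, (linForm (a k' i)) ^ (2 * v i)) := by
        intro k' _
        rw [map_prod]
        apply Finset.prod_nonneg
        intro i _
        rw [map_pow]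
        exact (even_two_mul (v i)).pow_nonneg _
      have := (Finset.sum_eq_zero_iff_of_nonneg hnn).mp hP0 k (Finset.mem_univ k)
      rw [map_prod] at this
      obtain ⟨i, _, hi⟩ := Finset.prod_eq_zero_iff.mp this
      refine ⟨i, ?_⟩
      rw [map_pow] at hi
      exact pow_eq_zero_iff (by have := hv i; omega) |>.mp hi
    choose g hg using hvan
    obtain ⟨j, j', hne, hgeq⟩ := Fintype.exists_ne_map_eq_of_card_lt g (by simpa using hmr)
    set w := a k (g j) with hw
    have h1 : w 0 * ((j : ℕ) + 1) + w 1 = 0 := by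
      have := hg j
      rw [eval_linForm, Fin.sum_univ_two] at this
      simpa using this
    have h2 : w 0 * ((j' : ℕ) + 1) + w 1 = 0 := by
      have := hg j'
      rw [hgeq, ← hw] at *
      rw [eval_linForm, Fin.sum_univ_two] at this
      simpa using this
    have hjj : ((j : ℕ) : ℝ) ≠ ((j' : ℕ) : ℝ) := by
      exact_mod_cast fun h => hne (Fin.ext (by exact_mod_cast h))
    have hw0 : w 0 = 0 := by
      have : w 0 * (((j : ℕ) : ℝ) - ((j' : ℕ) : ℝ)) = 0 := by linarith
      rcases mul_eq_zero.mp this with h | h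
      · exact h
      · exact absurd (sub_eq_zero.mp h) hjj
    have hw1 : w 1 = 0 := by
      rw [hw0] at h1; linarith
    have hlin : linForm w = 0 := by
      have hwz : w = fun _ => (0:ℝ) := by
        funext i; fin_cases i <;> assumption
      rw [hwz]
      simp [linForm]
    apply Finset.prod_eq_zero (Finset.mem_univ (g j))
    rw [← hw, hlin]
    exact zero_pow (by have := hv (g j); omega)
  -- hence the product form is zero, contradiction with its value at (0,1)
  have hzero : (∏ j : Fin r, (X 0 - MvPolynomial.C ((j : ℕ) + 1 : ℝ) * X 1) ^ 2)
      = (0 : MvPolynomial (Fin 2) ℝ) := by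
    rw [hrep]
    exact Finset.sum_eq_zero fun k _ => hterm0 k
  have hpos : (0:ℝ) < eval ![0, 1]
      (∏ j : Fin r, (X 0 - MvPolynomial.C ((j : ℕ) + 1 : ℝ) * X 1) ^ 2) := by
    rw [map_prod]
    apply Finset.prod_pos
    intro j _
    have : eval ![0, (1:ℝ)] ((X 0 - MvPolynomial.C ((j : ℕ) + 1 : ℝ) * X 1) ^ 2)
        = ((j : ℕ) + 1 : ℝ) ^ 2 := by
      simp
      ring
    rw [this]
    positivity
  rw [hzero] at hpos
  simp at hpos

lemma dehom_linForm (w : Fin 2 → ℝ) :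
    dehom (linForm w) = Polynomial.C (w 0) * Polynomial.X + Polynomial.C (w 1) := by
  rw [linForm, dehom, map_sum, Fin.sum_univ_two]
  simp [Algebra.algebraMap_eq_smul_one, Polynomial.smul_eq_C_mul]

lemma psd_subset_waring (m : ℕ) (hm : 0 < m) (v : Fin m → ℕ) (hv1 : ∀ i, v i = 1) :
    Psd 2 (2 * m) ⊆ WaringProdCone m v := by
  rintro p ⟨hhom, hpos⟩
  have hdeg : (dehom p).natDegree ≤ 2 * m :=
    le_trans (natDegree_dehom p) hhom.totalDegree_le
  have hfpos : ∀ t : ℝ, 0 ≤ (dehom p).eval t := by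
    intro t; rw [eval_dehom]; exact hpos _
  obtain ⟨s, a, b, hf⟩ := sqrep_clean hm (sqrep_main m (dehom p) hdeg hfpos)
  refine ⟨s, fun k i => ![a k i, b k i], ?_⟩
  have h2v : ∀ i : Fin m, 2 * v i = 2 := fun i => by rw [hv1 i]
  simp only [h2v]
  set Pc : MvPolynomial (Fin 2) ℝ := ∑ k, ∏ i, (linForm ![a k i, b k i]) ^ 2 with hPc
  have hPchom : Pc.IsHomogeneous (2 * m) := by
    apply IsHomogeneous.sum
    intro k _
    have := IsHomogeneous.prod Finset.univ
      (fun i => (linForm ![a k i, b k i]) ^ 2) (fun _ => 2)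
      (fun i _ => by simpa using (linForm_isHomogeneous ![a k i, b k i]).pow 2)
    simpa [Finset.sum_const, mul_comm] using this
  refine eq_of_dehom_eq hhom hPchom ?_
  have hde : ∀ q : MvPolynomial (Fin 2) ℝ, dehom q = MvPolynomial.aeval ![Polynomial.X, 1] q :=
    fun _ => rfl
  rw [hf, hde, map_sum]
  apply Finset.sum_congr rfl
  intro k _
  rw [map_prod]
  apply Finset.prod_congr rfl
  intro i _
  rw [map_pow, ← hde, dehom_linForm]
  simp

/-- For binary forms, the cone of sums of products of even powers of linear forms with
exponent pattern `(2v₁,…,2v_m)`, `v₁+⋯+v_m = r`, equals `P_{2,2r}` iff `m = r`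
(equivalently, each `v_i = 1`); and if `m < r` then `Π_{j=1}^r (x − j y)²` is not in the
cone. -/
theorem waringProdCone_eq_psd_iff (m r : ℕ) (hr : 0 < r) (v : Fin m → ℕ)
    (hv : ∀ i, 0 < v i) (hsum : ∑ i, v i = r) :
    (WaringProdCone m v = Psd 2 (2 * r) ↔ m = r) ∧
    (m = r ↔ ∀ i, v i = 1) ∧
    (m < r →
      (∏ j : Fin r, (X 0 - MvPolynomial.C ((j : ℕ) + 1 : ℝ) * X 1) ^ 2) ∉
        WaringProdCone m v) := by
  have hmle : m ≤ r := by
    calc m = ∑ _i : Fin m, 1 := by simp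
    _ ≤ ∑ i, v i := Finset.sum_le_sum (fun i _ => hv i)
    _ = r := hsum
  have part2 : m = r ↔ ∀ i, v i = 1 := by
    constructor
    · intro hmr
      by_contra hcon
      push_neg at hcon
      obtain ⟨i0, hi0⟩ := hcon
      have hlt : (∑ _i : Fin m, 1) < ∑ i, v i :=
        Finset.sum_lt_sum (fun i _ => hv i) ⟨i0, Finset.mem_univ i0, by have := hv i0; omega⟩
      rw [hsum] at hlt
      simp at hlt
      omega
    · intro h1
      rw [← hsum]
      simp [h1]
  have hpsdP0 : (∏ j : Fin r, (X 0 - MvPolynomial.C ((j : ℕ) + 1 : ℝ) * X 1) ^ 2)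
      ∈ Psd 2 (2 * r) := by
    constructor
    · have := IsHomogeneous.prod Finset.univ
        (fun j : Fin r => (X (0 : Fin 2) - MvPolynomial.C ((j : ℕ) + 1 : ℝ) * X 1) ^ 2)
        (fun _ => 2) (fun j _ => by
          have h1 : (X (0 : Fin 2) - MvPolynomial.C ((j : ℕ) + 1 : ℝ) * X 1
              : MvPolynomial (Fin 2) ℝ).IsHomogeneous 1 :=
            (isHomogeneous_X _ _).sub (isHomogeneous_C_mul_X _ _)
          simpa using h1.pow 2)
      simpa [Finset.sum_const, mul_comm] using this
    · intro u
      rw [map_prod]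
      apply Finset.prod_nonneg
      intro j _
      rw [map_pow]
      exact sq_nonneg _
  refine ⟨⟨?_, ?_⟩, part2, fun hlt => not_in_waring m r v hv hlt⟩
  · intro heq
    by_contra hne
    have hlt : m < r := lt_of_le_of_ne hmle hne
    rw [← heq] at hpsdP0
    exact (not_in_waring m r v hv hlt) hpsdP0
  · intro hmr
    have hv1 := part2.mp hmr
    subst hmr
    apply Set.Subset.antisymm
    · exact waring_subset_psd m m v hsum
    · exact psd_subset_waring m hr v hv1
end

section
/- If p ∈ F_{n,2r} is a convex function on ℝⁿ, then there exist an invertible n×n real matrix M, an integer m with 0 ≤ m ≤ n, and a form q of degree 2r in m variables which is positive definite on ℝ^m (q(w) > 0 for all 0 ≠ w ∈ ℝ^m), such that (p∘M)(x₁,…,xₙ) = q(x_{n−m+1},…,xₙ); that is, after an invertible linear change of variables, p depends only on its last m variables and is positive definite as a form in those variables. -/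
open MvPolynomial Filter

lemma aux_eval_aeval {n m : ℕ} (g : Fin n → MvPolynomial (Fin m) ℝ) (x : Fin m → ℝ)
    (p : MvPolynomial (Fin n) ℝ) :
    eval x (aeval g p) = eval (fun j => eval x (g j)) p := by
  induction p using MvPolynomial.induction_on with
  | C => simp
  | add p q hp hq => rw [map_add, map_add, map_add, hp, hq]
  | mul_X p i hp => rw [map_mul, map_mul, map_mul, aeval_X, hp, eval_X]

lemma aux_eval_aeval_poly {n : ℕ} (g : Fin n → Polynomial ℝ) (t : ℝ)
    (p : MvPolynomial (Fin n) ℝ) :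
    Polynomial.eval t (aeval g p) = eval (fun j => (g j).eval t) p := by
  induction p using MvPolynomial.induction_on with
  | C => simp
  | add p q hp hq => rw [map_add, Polynomial.eval_add, map_add, hp, hq]
  | mul_X p i hp => rw [map_mul, Polynomial.eval_mul, map_mul, aeval_X, hp, eval_X]

lemma aux_eval_smul {n d : ℕ} {p : MvPolynomial (Fin n) ℝ} (hp : p.IsHomogeneous d)
    (c : ℝ) (x : Fin n → ℝ) : eval (c • x) p = c ^ d * eval x p := by
  rw [eval_eq', eval_eq', Finset.mul_sum]
  refine Finset.sum_congr rfl fun i hi => ?_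
  rw [mem_support_iff] at hi
  have hw : (Finsupp.weight (1 : Fin n → ℕ)) i = d := hp hi
  have hsum : ∑ j, i j = d := by
    rw [← hw, Finsupp.weight_apply, Finsupp.sum_fintype]
    · simp
    · simp
  have : ∀ j : Fin n, (c • x) j ^ i j = c ^ i j * x j ^ i j := by
    intro j; rw [Pi.smul_apply, smul_eq_mul, mul_pow]
  simp_rw [this]
  rw [Finset.prod_mul_distrib, Finset.prod_pow_eq_pow_sum, hsum]
  ring

open Module

/-- A convex form is, after an invertible linear change of variables, a positive definite
form in its last `m` variables, for some `0 ≤ m ≤ n`. -/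
theorem convex_form_structure (n r : ℕ) (p : MvPolynomial (Fin n) ℝ)
    (hp : p.IsHomogeneous (2 * r))
    (hconv : ConvexOn ℝ Set.univ (fun x : Fin n → ℝ => eval x p)) :
    ∃ M : Matrix (Fin n) (Fin n) ℝ, IsUnit M ∧
      ∃ (m : ℕ) (hm : m ≤ n) (q : MvPolynomial (Fin m) ℝ),
        q.IsHomogeneous (2 * r) ∧
        (∀ w : Fin m → ℝ, w ≠ 0 → 0 < eval w q) ∧
        ∀ x : Fin n → ℝ,
          eval x (compMat p M) =
            eval (fun j : Fin m => x ⟨n - m + (j : ℕ), by have := j.2; omega⟩) q := by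
  rcases Nat.eq_zero_or_pos r with hr | hr
  · subst hr
    refine ⟨1, isUnit_one, 0, Nat.zero_le n, C (constantCoeff p), ?_, ?_, ?_⟩
    · simpa using isHomogeneous_C (Fin 0) (constantCoeff p)
    · intro w hw
      exact absurd (Subsingleton.elim w 0) hw
    · intro x
      have hp0 : p = C (constantCoeff p) := by
        ext d
        rcases eq_or_ne d 0 with rfl | hd
        · simp [constantCoeff_eq]
        · rw [hp.coeff_eq_zero]
          · simp [coeff_C, Ne.symm hd]
          · intro h
            exact hd (by simpa [Finsupp.degree_eq_zero_iff] using h)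
      rw [compMat, aux_eval_aeval]
      conv_lhs => rw [hp0]
      simp
  · set f : (Fin n → ℝ) → ℝ := fun x => eval x p with hfdef
    have hsmul : ∀ (c : ℝ) (x), f (c • x) = c ^ (2*r) * f x := fun c x => aux_eval_smul hp c x
    have hf0 : f 0 = 0 := by
      have h := hsmul 0 0
      rw [smul_zero] at h
      rw [h, zero_pow (by omega), zero_mul]
    have hneg : ∀ x, f (-x) = f x := by
      intro x
      have h := hsmul (-1) x
      rw [neg_one_smul] at h
      rw [h, pow_mul, neg_one_sq, one_pow, one_mul]
    have hpsd : ∀ x, 0 ≤ f x := by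
      intro x
      have h := hconv.2 (Set.mem_univ x) (Set.mem_univ (-x))
        (le_of_lt one_half_pos) (le_of_lt one_half_pos) (by norm_num)
      rw [smul_neg, add_neg_cancel, hf0] at h
      rw [hneg x] at h
      simp only [smul_eq_mul] at h
      linarith
    have hinv : ∀ v, f v = 0 → ∀ x, f (x + v) = f x := by
      intro v hv x
      set P : Polynomial ℝ :=
        aeval (fun i => Polynomial.C (x i) + Polynomial.C (v i) * Polynomial.X) p with hP
      have hPe : ∀ t : ℝ, P.eval t = f (x + t • v) := by
        intro t
        rw [hP, aux_eval_aeval_poly]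
        have harg : (fun j => Polynomial.eval t
            (Polynomial.C (x j) + Polynomial.C (v j) * Polynomial.X)) = x + t • v := by
          funext j
          simp only [Polynomial.eval_add, Polynomial.eval_mul, Polynomial.eval_C,
            Polynomial.eval_X, Pi.add_apply, Pi.smul_apply, smul_eq_mul]
          ring
        rw [harg]
      have hub : ∀ t : ℝ, |P.eval t| ≤ 2 ^ (2*r) * f x := by
        intro t
        have h1 : x + t • v = (1/2 : ℝ) • ((2:ℝ) • x) + (1/2 : ℝ) • ((2*t) • v) := by
          have ht : (1/2 : ℝ) * (2*t) = t := by ring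
          rw [smul_smul, smul_smul, ht]
          norm_num
        have h := hconv.2 (Set.mem_univ ((2:ℝ) • x)) (Set.mem_univ ((2*t) • v))
          (le_of_lt one_half_pos) (le_of_lt one_half_pos) (by norm_num)
        rw [← h1] at h
        simp only [smul_eq_mul] at h
        rw [hPe t, abs_of_nonneg (hpsd _)]
        have h2 := hsmul 2 x
        have h3 := hsmul (2*t) v
        rw [hv, mul_zero] at h3
        have hfx := hpsd x
        have hpow : (0:ℝ) < 2 ^ (2*r) := by positivity
        calc f (x + t • v) ≤ 1/2 * f ((2:ℝ) • x) + 1/2 * f ((2*t) • v) := h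
          _ = 1/2 * (2 ^ (2*r) * f x) := by rw [h2, h3]; ring
          _ ≤ 2 ^ (2*r) * f x := by nlinarith
      have hbd : IsBoundedUnder (· ≤ ·) atTop fun t => |P.eval t| :=
        ⟨2 ^ (2*r) * f x, Filter.eventually_map.mpr (Filter.Eventually.of_forall hub)⟩
      have hdeg : P.degree ≤ 0 := (Polynomial.abs_isBoundedUnder_iff P).mp hbd
      have hC : P = Polynomial.C (P.coeff 0) := Polynomial.eq_C_of_degree_le_zero hdeg
      have h01 : P.eval 1 = P.eval 0 := by rw [hC]; simp
      have he1 := hPe 1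
      have he0 := hPe 0
      rw [one_smul] at he1
      rw [zero_smul, add_zero] at he0
      rw [← he1, h01, he0]
    have hadd : ∀ u w : Fin n → ℝ, f u = 0 → f w = 0 → f (u + w) = 0 := by
      intro u w hu hw
      rw [hinv w hw u, hu]
    let V : Submodule ℝ (Fin n → ℝ) :=
      { carrier := {u | f u = 0}
        zero_mem' := hf0
        add_mem' := fun hu hw => hadd _ _ hu hw
        smul_mem' := fun c u hu => by
          have : f (c • u) = c ^ (2*r) * f u := hsmul c u
          simp only [Set.mem_setOf_eq] at *
          rw [this, hu, mul_zero] }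
    obtain ⟨W, hVW⟩ := Submodule.exists_isCompl V
    have hrank : finrank ℝ V + finrank ℝ W = n := by
      rw [Submodule.finrank_add_eq_of_isCompl hVW, Module.finrank_fin_fun]
    let bV := Module.finBasis ℝ V
    let bW := Module.finBasis ℝ W
    set d := finrank ℝ V with hd
    set m := finrank ℝ W with hm'
    have hm : m ≤ n := by omega
    let e : Fin n ≃ (Fin d ⊕ Fin m) := (finCongr hrank.symm).trans finSumFinEquiv.symm
    let E : (Fin n → ℝ) ≃ₗ[ℝ] (Fin n → ℝ) :=
      (LinearEquiv.funCongrLeft ℝ ℝ e.symm).trans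
        ((LinearEquiv.sumArrowLequivProdArrow (Fin d) (Fin m) ℝ ℝ).trans
          ((bV.equivFun.symm.prodCongr bW.equivFun.symm).trans
            (Submodule.prodEquivOfIsCompl V W hVW)))
    have hE : ∀ x : Fin n → ℝ, E x =
        ↑(bV.equivFun.symm (fun i => x (e.symm (Sum.inl i)))) +
        ↑(bW.equivFun.symm (fun l => x (e.symm (Sum.inr l)))) := by
      intro x
      rfl
    set M := LinearMap.toMatrix' (E : (Fin n → ℝ) →ₗ[ℝ] (Fin n → ℝ)) with hM
    have hMu : IsUnit M := by
      rw [Matrix.isUnit_iff_isUnit_det, hM, LinearMap.det_toMatrix']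
      exact E.isUnit_det'
    have hMx : ∀ x : Fin n → ℝ, (fun j => ∑ k, M j k * x k) = E x := by
      intro x
      have h : M.mulVec x = E x := by
        rw [← Matrix.toLin'_apply, hM, Matrix.toLin'_toMatrix']
        rfl
      funext j
      rw [← h]
      rfl
    let g : Fin n → MvPolynomial (Fin m) ℝ :=
      fun j => ∑ l, MvPolynomial.C ((bW l : Fin n → ℝ) j) * X l
    let q : MvPolynomial (Fin m) ℝ := aeval g p
    have hq_homog : q.IsHomogeneous (2*r) := by
      have h := hp.aeval g
        (fun j => IsHomogeneous.sum _ _ _ (fun l _ => isHomogeneous_C_mul_X _ _))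
      simpa [q] using h
    have hq_eval : ∀ y : Fin m → ℝ, eval y q = f (∑ l, y l • (bW l : Fin n → ℝ)) := by
      intro y
      rw [show q = aeval g p from rfl, aux_eval_aeval]
      have harg : (fun j => eval y (g j)) = ∑ l, y l • (bW l : Fin n → ℝ) := by
        funext j
        simp [g, Finset.sum_apply, mul_comm]
      rw [harg]
    refine ⟨M, hMu, m, hm, q, hq_homog, ?_, ?_⟩
    · intro w hw
      rw [hq_eval w]
      set u := ∑ l, w l • (bW l : Fin n → ℝ) with hu
      have hu_coe : u = ↑(bW.equivFun.symm w) := by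
        rw [hu, Basis.equivFun_symm_apply]
        push_cast
        rfl
      have hune : u ≠ 0 := by
        intro h
        rw [hu_coe] at h
        have h2 : bW.equivFun.symm w = 0 := Subtype.ext (by simpa using h)
        exact hw ((LinearEquiv.map_eq_zero_iff bW.equivFun.symm).mp h2)
      have huW : u ∈ W := by rw [hu_coe]; exact (bW.equivFun.symm w).2
      rcases lt_or_eq_of_le (hpsd u) with h | h
      · exact h
      · exfalso
        have huV : u ∈ V := h.symm
        exact hune (Submodule.disjoint_def.mp hVW.disjoint u huV huW)
    · intro x
      have h1 : eval x (compMat p M) = f (E x) := by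
        rw [compMat, aux_eval_aeval]
        have harg : (fun j => eval x (∑ k, C (M j k) * X k)) =
            fun j => ∑ k, M j k * x k := by
          funext j
          simp
        rw [harg, hMx x]
      rw [h1, hE x]
      set a := bV.equivFun.symm (fun i => x (e.symm (Sum.inl i))) with ha
      set b := bW.equivFun.symm (fun l => x (e.symm (Sum.inr l))) with hb
      have h2 : f (↑a + ↑b) = f ↑b := by
        rw [add_comm]
        exact hinv (↑a) a.2 (↑b)
      rw [h2]
      have h3 : (↑b : Fin n → ℝ) = ∑ l, x (e.symm (Sum.inr l)) • (bW l : Fin n → ℝ) := by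
        rw [hb, Basis.equivFun_symm_apply]
        push_cast
        rfl
      have hval : ∀ l : Fin m, (e.symm (Sum.inr l) : ℕ) = d + l := by
        intro l
        simp [e, finSumFinEquiv]
      have h4 := hq_eval (fun l => x (e.symm (Sum.inr l)))
      rw [← h3] at h4
      rw [← h4]
      exact congrArg (fun y => eval y q)
        (by
          funext l
          refine congrArg x (Fin.ext ?_)
          rw [hval l]
          show d + (l : ℕ) = n - m + (l : ℕ)
          omega)
end

section
/- Let r ≥ 1 be an integer and a > 0 a real number. The binary form (x² + y²)^r (x² + a y²) is a convex function on ℝ² if and only if a + 1/a ≤ 8r + 18 + 8/r. -/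
set_option maxHeartbeats 1000000

/-- Core algebraic inequality: the quadratic form `K` in `(q1,q2)` is nonnegative. -/
lemma K_nonneg (p a x y q1 q2 : ℝ) (hp : 1 ≤ p) (ha : 0 < a)
    (hE : 0 ≤ 4*(a*(p+1)*(2*p+1)*(1+a*p))*(p*(2*p+1)*(p+2)*(1-a)^2)
        - (p*(2*p+1)*(-1+2*a*(p+2)-a^2*(2*p+3)))^2)
    (hu : 0 < x^2+y^2) :
    0 ≤ p*(p-1)*(x^2+y^2)*(2*(x*q1+y*q2))^2*(x^2+a*y^2)
      + p*(x^2+y^2)^2*(2*(q1^2+q2^2))*(x^2+a*y^2)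
      + 2*(p*(x^2+y^2)^2*(2*(x*q1+y*q2))*(2*(x*q1+a*(y*q2))))
      + (x^2+y^2)^3*(2*(q1^2+a*q2^2)) := by
  have hW : (0:ℝ) ≤ x^2 + a*y^2 := by positivity
  have h1 : 0 < p*(x^2+a*y^2) + (x^2+y^2) := by nlinarith
  have hp1 : (0:ℝ) ≤ p - 1 := by linarith
  have hKA : 0 < 2*(x^2+y^2)*((x^2+y^2)*(p*(x^2+a*y^2)+(x^2+y^2))
      + 2*x^2*(p-1)*(p*(x^2+a*y^2)+(x^2+y^2)) + 2*x^2*(x^2+y^2)*(p+1)) := by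
    have h2 : (0:ℝ) ≤ 2*x^2*(p-1)*(p*(x^2+a*y^2)+(x^2+y^2)) := by positivity
    have h3 : (0:ℝ) ≤ 2*x^2*(x^2+y^2)*(p+1) := by positivity
    have h4 : 0 < (x^2+y^2)*(p*(x^2+a*y^2)+(x^2+y^2)) := mul_pos hu h1
    nlinarith
  have hc0 : 0 < a*(p+1)*(2*p+1)*(1+a*p) := by
    have : (0:ℝ) < 1 + a*p := by nlinarith
    have h5 : (0:ℝ) < p+1 := by linarith
    have h6 : (0:ℝ) < 2*p+1 := by linarith
    positivity
  -- G ≥ 0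
  have hG : 0 ≤ (a*(p+1)*(2*p+1)*(1+a*p))*(x^2+y^2)^2
      + (p*(2*p+1)*(-1+2*a*(p+2)-a^2*(2*p+3)))*(x^2+y^2)*x^2
      + (p*(2*p+1)*(p+2)*(1-a)^2)*x^4 := by
    have idG : 4*(a*(p+1)*(2*p+1)*(1+a*p))*((a*(p+1)*(2*p+1)*(1+a*p))*(x^2+y^2)^2
        + (p*(2*p+1)*(-1+2*a*(p+2)-a^2*(2*p+3)))*(x^2+y^2)*x^2
        + (p*(2*p+1)*(p+2)*(1-a)^2)*x^4)
        = (2*(a*(p+1)*(2*p+1)*(1+a*p))*(x^2+y^2)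
            + (p*(2*p+1)*(-1+2*a*(p+2)-a^2*(2*p+3)))*x^2)^2
          + (4*(a*(p+1)*(2*p+1)*(1+a*p))*(p*(2*p+1)*(p+2)*(1-a)^2)
            - (p*(2*p+1)*(-1+2*a*(p+2)-a^2*(2*p+3)))^2)*x^4 := by ring
    have hx4 : (0:ℝ) ≤ x^4 := by positivity
    nlinarith [sq_nonneg (2*(a*(p+1)*(2*p+1)*(1+a*p))*(x^2+y^2)
        + (p*(2*p+1)*(-1+2*a*(p+2)-a^2*(2*p+3)))*x^2), mul_nonneg hE hx4]
  -- main identity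
  have hid : 4*(2*(x^2+y^2)*((x^2+y^2)*(p*(x^2+a*y^2)+(x^2+y^2))
        + 2*x^2*(p-1)*(p*(x^2+a*y^2)+(x^2+y^2)) + 2*x^2*(x^2+y^2)*(p+1)))
      * (p*(p-1)*(x^2+y^2)*(2*(x*q1+y*q2))^2*(x^2+a*y^2)
        + p*(x^2+y^2)^2*(2*(q1^2+q2^2))*(x^2+a*y^2)
        + 2*(p*(x^2+y^2)^2*(2*(x*q1+y*q2))*(2*(x*q1+a*(y*q2))))
        + (x^2+y^2)^3*(2*(q1^2+a*q2^2)))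
      = (2*(2*(x^2+y^2)*((x^2+y^2)*(p*(x^2+a*y^2)+(x^2+y^2))
            + 2*x^2*(p-1)*(p*(x^2+a*y^2)+(x^2+y^2)) + 2*x^2*(x^2+y^2)*(p+1)))*q1
          + (8*p*x*y*((p+a)*x^4 + (1+p)*(1+a)*x^2*y^2 + (1+a*p)*y^4))*q2)^2
        + 16*(x^2+y^2)^4*((a*(p+1)*(2*p+1)*(1+a*p))*(x^2+y^2)^2
          + (p*(2*p+1)*(-1+2*a*(p+2)-a^2*(2*p+3)))*(x^2+y^2)*x^2
          + (p*(2*p+1)*(p+2)*(1-a)^2)*x^4)*q2^2 := by ring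
  have hR : 0 ≤ (2*(2*(x^2+y^2)*((x^2+y^2)*(p*(x^2+a*y^2)+(x^2+y^2))
        + 2*x^2*(p-1)*(p*(x^2+a*y^2)+(x^2+y^2)) + 2*x^2*(x^2+y^2)*(p+1)))*q1
      + (8*p*x*y*((p+a)*x^4 + (1+p)*(1+a)*x^2*y^2 + (1+a*p)*y^4))*q2)^2
    + 16*(x^2+y^2)^4*((a*(p+1)*(2*p+1)*(1+a*p))*(x^2+y^2)^2
      + (p*(2*p+1)*(-1+2*a*(p+2)-a^2*(2*p+3)))*(x^2+y^2)*x^2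
      + (p*(2*p+1)*(p+2)*(1-a)^2)*x^4)*q2^2 := by
    have h16 : (0:ℝ) ≤ 16*(x^2+y^2)^4 := by positivity
    exact add_nonneg (sq_nonneg _) (mul_nonneg (mul_nonneg h16 hG) (sq_nonneg q2))
  rw [← hid] at hR
  have h4 : 0 < 4*(2*(x^2+y^2)*((x^2+y^2)*(p*(x^2+a*y^2)+(x^2+y^2))
      + 2*x^2*(p-1)*(p*(x^2+a*y^2)+(x^2+y^2)) + 2*x^2*(x^2+y^2)*(p+1))) := by linarith
  exact (mul_nonneg_iff_of_pos_left h4).mp hR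

/-- Key exponent-juggling identity relating the second derivative expression to `K`. -/
lemma key_id (r : ℕ) (hr : 1 ≤ r) (a x y q1 q2 : ℝ) :
    (x^2+y^2)^2 * ((r:ℝ)*((r-1 : ℕ):ℝ)*(x^2+y^2)^(r-2)*(2*(x*q1+y*q2))^2*(x^2+a*y^2)
      + (r:ℝ)*(x^2+y^2)^(r-1)*(2*(q1^2+q2^2))*(x^2+a*y^2)
      + 2*((r:ℝ)*(x^2+y^2)^(r-1)*(2*(x*q1+y*q2))*(2*(x*q1+a*(y*q2))))
      + (x^2+y^2)^r*(2*(q1^2+a*q2^2)))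
    = (x^2+y^2)^(r-1) * ((r:ℝ)*((r:ℝ)-1)*(x^2+y^2)*(2*(x*q1+y*q2))^2*(x^2+a*y^2)
      + (r:ℝ)*(x^2+y^2)^2*(2*(q1^2+q2^2))*(x^2+a*y^2)
      + 2*((r:ℝ)*(x^2+y^2)^2*(2*(x*q1+y*q2))*(2*(x*q1+a*(y*q2))))
      + (x^2+y^2)^3*(2*(q1^2+a*q2^2))) := by
  obtain ⟨m, rfl⟩ : ∃ m, r = m + 1 := ⟨r - 1, by omega⟩
  cases m with
  | zero => norm_num; ring
  | succ n =>
    show (x^2+y^2)^2 * ((((n:ℕ)+2 : ℕ):ℝ)*(((n:ℕ)+1 : ℕ):ℝ)*(x^2+y^2)^(n)*(2*(x*q1+y*q2))^2*(x^2+a*y^2)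
      + (((n:ℕ)+2 : ℕ):ℝ)*(x^2+y^2)^(n+1)*(2*(q1^2+q2^2))*(x^2+a*y^2)
      + 2*((((n:ℕ)+2 : ℕ):ℝ)*(x^2+y^2)^(n+1)*(2*(x*q1+y*q2))*(2*(x*q1+a*(y*q2))))
      + (x^2+y^2)^(n+2)*(2*(q1^2+a*q2^2)))
      = (x^2+y^2)^(n+1) * _
    push_cast
    ring

/-- Pointwise nonnegativity of the second directional derivative expression. -/
lemma gpp_nonneg (r : ℕ) (hr : 1 ≤ r) (a : ℝ) (ha : 0 < a)
    (hE : 0 ≤ 4*(a*((r:ℝ)+1)*(2*(r:ℝ)+1)*(1+a*(r:ℝ)))*((r:ℝ)*(2*(r:ℝ)+1)*((r:ℝ)+2)*(1-a)^2)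
        - ((r:ℝ)*(2*(r:ℝ)+1)*(-1+2*a*((r:ℝ)+2)-a^2*(2*(r:ℝ)+3)))^2)
    (x y q1 q2 : ℝ) :
    0 ≤ (r:ℝ)*((r-1 : ℕ):ℝ)*(x^2+y^2)^(r-2)*(2*(x*q1+y*q2))^2*(x^2+a*y^2)
      + (r:ℝ)*(x^2+y^2)^(r-1)*(2*(q1^2+q2^2))*(x^2+a*y^2)
      + 2*((r:ℝ)*(x^2+y^2)^(r-1)*(2*(x*q1+y*q2))*(2*(x*q1+a*(y*q2))))
      + (x^2+y^2)^r*(2*(q1^2+a*q2^2)) := by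
  rcases eq_or_lt_of_le (by positivity : (0:ℝ) ≤ x^2+y^2) with hu | hu
  · -- x = y = 0
    have hx : x = 0 := by nlinarith [sq_nonneg x, sq_nonneg y]
    have hy : y = 0 := by nlinarith [sq_nonneg x, sq_nonneg y]
    subst hx; subst hy
    have : ((0:ℝ)^2 + 0^2)^r = 0 := by
      rw [show (0:ℝ)^2 + 0^2 = 0 by norm_num, zero_pow (by omega : r ≠ 0)]
    rw [this]
    norm_num
  · have hp : (1:ℝ) ≤ (r:ℝ) := by exact_mod_cast hr
    have hK := K_nonneg (r:ℝ) a x y q1 q2 hp ha hE hu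
    have hkey := key_id r hr a x y q1 q2
    have h2 : (0:ℝ) < (x^2+y^2)^2 := by positivity
    have hR : 0 ≤ (x^2+y^2)^(r-1) * ((r:ℝ)*((r:ℝ)-1)*(x^2+y^2)*(2*(x*q1+y*q2))^2*(x^2+a*y^2)
      + (r:ℝ)*(x^2+y^2)^2*(2*(q1^2+q2^2))*(x^2+a*y^2)
      + 2*((r:ℝ)*(x^2+y^2)^2*(2*(x*q1+y*q2))*(2*(x*q1+a*(y*q2))))
      + (x^2+y^2)^3*(2*(q1^2+a*q2^2))) := mul_nonneg (pow_nonneg hu.le _) hK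
    rw [← hkey] at hR
    exact (mul_nonneg_iff_of_pos_left h2).mp hR

/-- First derivative of the restriction of the form to a line. -/
lemma hasDeriv_g (r : ℕ) (a p1 p2 d1 d2 : ℝ) (t : ℝ) :
    HasDerivAt (fun t : ℝ => ((p1+t*d1)^2+(p2+t*d2)^2)^r * ((p1+t*d1)^2+a*(p2+t*d2)^2))
      ((r:ℝ)*((p1+t*d1)^2+(p2+t*d2)^2)^(r-1)*(2*((p1+t*d1)*d1+(p2+t*d2)*d2))*((p1+t*d1)^2+a*(p2+t*d2)^2)
        + ((p1+t*d1)^2+(p2+t*d2)^2)^r*(2*((p1+t*d1)*d1+a*((p2+t*d2)*d2)))) t := by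
  have hX : HasDerivAt (fun t:ℝ => p1+t*d1) d1 t := by
    simpa using ((hasDerivAt_id t).mul_const d1).const_add p1
  have hY : HasDerivAt (fun t:ℝ => p2+t*d2) d2 t := by
    simpa using ((hasDerivAt_id t).mul_const d2).const_add p2
  have hU : HasDerivAt (fun t:ℝ => (p1+t*d1)^2+(p2+t*d2)^2)
      (2*((p1+t*d1)*d1+(p2+t*d2)*d2)) t := by
    have := (hX.fun_pow 2).fun_add (hY.fun_pow 2)
    convert this using 1
    all_goals (try with_reducible_and_instances rfl)
    all_goals (push_cast; try ring)
  have hW : HasDerivAt (fun t:ℝ => (p1+t*d1)^2+a*(p2+t*d2)^2)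
      (2*((p1+t*d1)*d1+a*((p2+t*d2)*d2))) t := by
    have := (hX.fun_pow 2).fun_add ((hY.fun_pow 2).const_mul a)
    convert this using 1
    all_goals (try with_reducible_and_instances rfl)
    all_goals (push_cast; try ring)
  have := (hU.fun_pow r).fun_mul hW
  convert this using 1
  all_goals (try with_reducible_and_instances rfl)
  all_goals (push_cast; try ring)

/-- Second derivative of the restriction of the form to a line. -/
lemma hasDeriv_g' (r : ℕ) (hr : 1 ≤ r) (a p1 p2 d1 d2 : ℝ) (t : ℝ) :
    HasDerivAt (fun t : ℝ =>
      (r:ℝ)*((p1+t*d1)^2+(p2+t*d2)^2)^(r-1)*(2*((p1+t*d1)*d1+(p2+t*d2)*d2))*((p1+t*d1)^2+a*(p2+t*d2)^2)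
        + ((p1+t*d1)^2+(p2+t*d2)^2)^r*(2*((p1+t*d1)*d1+a*((p2+t*d2)*d2))))
      ((r:ℝ)*((r-1 : ℕ):ℝ)*((p1+t*d1)^2+(p2+t*d2)^2)^(r-2)*(2*((p1+t*d1)*d1+(p2+t*d2)*d2))^2*((p1+t*d1)^2+a*(p2+t*d2)^2)
        + (r:ℝ)*((p1+t*d1)^2+(p2+t*d2)^2)^(r-1)*(2*(d1^2+d2^2))*((p1+t*d1)^2+a*(p2+t*d2)^2)
        + 2*((r:ℝ)*((p1+t*d1)^2+(p2+t*d2)^2)^(r-1)*(2*((p1+t*d1)*d1+(p2+t*d2)*d2))*(2*((p1+t*d1)*d1+a*((p2+t*d2)*d2))))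
        + ((p1+t*d1)^2+(p2+t*d2)^2)^r*(2*(d1^2+a*d2^2))) t := by
  have hX : HasDerivAt (fun t:ℝ => p1+t*d1) d1 t := by
    simpa using ((hasDerivAt_id t).mul_const d1).const_add p1
  have hY : HasDerivAt (fun t:ℝ => p2+t*d2) d2 t := by
    simpa using ((hasDerivAt_id t).mul_const d2).const_add p2
  have hU : HasDerivAt (fun t:ℝ => (p1+t*d1)^2+(p2+t*d2)^2)
      (2*((p1+t*d1)*d1+(p2+t*d2)*d2)) t := by
    have := (hX.fun_pow 2).fun_add (hY.fun_pow 2)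
    convert this using 1
    all_goals (try with_reducible_and_instances rfl)
    all_goals (push_cast; try ring)
  have hW : HasDerivAt (fun t:ℝ => (p1+t*d1)^2+a*(p2+t*d2)^2)
      (2*((p1+t*d1)*d1+a*((p2+t*d2)*d2))) t := by
    have := (hX.fun_pow 2).fun_add ((hY.fun_pow 2).const_mul a)
    convert this using 1
    all_goals (try with_reducible_and_instances rfl)
    all_goals (push_cast; try ring)
  have hU' : HasDerivAt (fun t:ℝ => 2*((p1+t*d1)*d1+(p2+t*d2)*d2)) (2*(d1^2+d2^2)) t := by
    have := ((hX.mul_const d1).fun_add (hY.mul_const d2)).const_mul 2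
    convert this using 1
    all_goals (try with_reducible_and_instances rfl)
    all_goals ring
  have hW' : HasDerivAt (fun t:ℝ => 2*((p1+t*d1)*d1+a*((p2+t*d2)*d2))) (2*(d1^2+a*d2^2)) t := by
    have := ((hX.mul_const d1).fun_add (((hY.mul_const d2)).const_mul a)).const_mul 2
    convert this using 1
    all_goals (try with_reducible_and_instances rfl)
    all_goals ring
  have h1 := (((hU.fun_pow (r-1)).const_mul (r:ℝ)).fun_mul hU').fun_mul hW
  have h2 := (hU.fun_pow r).fun_mul hW'
  have := h1.fun_add h2
  convert this using 1
  all_goals (try with_reducible_and_instances rfl)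
  have hss : r - 1 - 1 = r - 2 := by omega
  rw [hss]
  push_cast
  try ring

/-- A twice differentiable convex function on `ℝ` has nonnegative second derivative. -/
lemma second_deriv_nonneg_of_convexOn {g g' g'' : ℝ → ℝ} (hc : ConvexOn ℝ Set.univ g)
    (h1 : ∀ t, HasDerivAt g (g' t) t) (h2 : ∀ t, HasDerivAt g' (g'' t) t) (t : ℝ) :
    0 ≤ g'' t := by
  have hd : deriv g = g' := funext fun s => (h1 s).deriv
  have hmono : Monotone g' := by
    have := hc.monotoneOn_deriv (fun s _ => (h1 s).differentiableAt)
    rw [hd] at this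
    exact monotoneOn_univ.mp this
  have hs : Filter.Tendsto (slope g' t) (nhdsWithin t (Set.Ioi t)) (nhds (g'' t)) := by
    refine (hasDerivAt_iff_tendsto_slope.mp (h2 t)).mono_left (nhdsWithin_mono t ?_)
    intro u hu
    exact ne_of_gt hu
  refine ge_of_tendsto hs ?_
  filter_upwards [self_mem_nhdsWithin] with u hu
  rw [slope_def_field]
  have htu : t < u := hu
  exact div_nonneg (sub_nonneg.mpr (hmono htu.le)) (sub_nonneg.mpr htu.le)

lemma big_id (p a x y q1 q2 : ℝ) :
    4*(2*(x^2+y^2)*((x^2+y^2)*(p*(x^2+a*y^2)+(x^2+y^2))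
        + 2*x^2*(p-1)*(p*(x^2+a*y^2)+(x^2+y^2)) + 2*x^2*(x^2+y^2)*(p+1)))
      * (p*(p-1)*(x^2+y^2)*(2*(x*q1+y*q2))^2*(x^2+a*y^2)
        + p*(x^2+y^2)^2*(2*(q1^2+q2^2))*(x^2+a*y^2)
        + 2*(p*(x^2+y^2)^2*(2*(x*q1+y*q2))*(2*(x*q1+a*(y*q2))))
        + (x^2+y^2)^3*(2*(q1^2+a*q2^2)))
    = (2*(2*(x^2+y^2)*((x^2+y^2)*(p*(x^2+a*y^2)+(x^2+y^2))
          + 2*x^2*(p-1)*(p*(x^2+a*y^2)+(x^2+y^2)) + 2*x^2*(x^2+y^2)*(p+1)))*q1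
        + (8*p*x*y*((p+a)*x^4 + (1+p)*(1+a)*x^2*y^2 + (1+a*p)*y^4))*q2)^2
      + 16*(x^2+y^2)^4*((a*(p+1)*(2*p+1)*(1+a*p))*(x^2+y^2)^2
        + (p*(2*p+1)*(-1+2*a*(p+2)-a^2*(2*p+3)))*((x^2+y^2)*x^2)
        + (p*(2*p+1)*(p+2)*(1-a)^2)*x^4)*q2^2 := by ring


lemma quad_wit {A g u K : ℝ} (hA : 0 < A) (hu : 0 < u) (hg : g < 0)
    (hid : 4*A*K = 0^2 + 16*u^4*g*(2*A)^2) : K < 0 := by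
  have h1 : 0 < u^4 := by positivity
  have h2 : 0 < A^2 := by positivity
  nlinarith [hid, mul_neg_of_pos_of_neg (mul_pos h1 h2) hg, mul_pos hA hA]

lemma witness_neg (p a x y : ℝ) (hp : 1 ≤ p) (ha : 0 < a) (hu : 0 < x^2+y^2)
    (hG : (a*(p+1)*(2*p+1)*(1+a*p))*(x^2+y^2)^2
        + (p*(2*p+1)*(-1+2*a*(p+2)-a^2*(2*p+3)))*((x^2+y^2)*x^2)
        + (p*(2*p+1)*(p+2)*(1-a)^2)*x^4 < 0) :
    ∃ q1 q2 : ℝ, p*(p-1)*(x^2+y^2)*(2*(x*q1+y*q2))^2*(x^2+a*y^2)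
      + p*(x^2+y^2)^2*(2*(q1^2+q2^2))*(x^2+a*y^2)
      + 2*(p*(x^2+y^2)^2*(2*(x*q1+y*q2))*(2*(x*q1+a*(y*q2))))
      + (x^2+y^2)^3*(2*(q1^2+a*q2^2)) < 0 := by
  have hW : (0:ℝ) ≤ x^2 + a*y^2 := by positivity
  have h1 : 0 < p*(x^2+a*y^2) + (x^2+y^2) := by nlinarith
  have hp1 : (0:ℝ) ≤ p - 1 := by linarith
  have hKA : 0 < 2*(x^2+y^2)*((x^2+y^2)*(p*(x^2+a*y^2)+(x^2+y^2))
      + 2*x^2*(p-1)*(p*(x^2+a*y^2)+(x^2+y^2)) + 2*x^2*(x^2+y^2)*(p+1)) := by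
    have h2 : (0:ℝ) ≤ 2*x^2*(p-1)*(p*(x^2+a*y^2)+(x^2+y^2)) := by positivity
    have h3 : (0:ℝ) ≤ 2*x^2*(x^2+y^2)*(p+1) := by positivity
    have h4 : 0 < (x^2+y^2)*(p*(x^2+a*y^2)+(x^2+y^2)) := mul_pos hu h1
    nlinarith
  refine ⟨-(8*p*x*y*((p+a)*x^4 + (1+p)*(1+a)*x^2*y^2 + (1+a*p)*y^4)),
    2*(2*(x^2+y^2)*((x^2+y^2)*(p*(x^2+a*y^2)+(x^2+y^2))
      + 2*x^2*(p-1)*(p*(x^2+a*y^2)+(x^2+y^2)) + 2*x^2*(x^2+y^2)*(p+1))), ?_⟩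
  have hinst := big_id p a x y
    (-(8*p*x*y*((p+a)*x^4 + (1+p)*(1+a)*x^2*y^2 + (1+a*p)*y^4)))
    (2*(2*(x^2+y^2)*((x^2+y^2)*(p*(x^2+a*y^2)+(x^2+y^2))
      + 2*x^2*(p-1)*(p*(x^2+a*y^2)+(x^2+y^2)) + 2*x^2*(x^2+y^2)*(p+1))))
  have hz : (2*(2*(x^2+y^2)*((x^2+y^2)*(p*(x^2+a*y^2)+(x^2+y^2))
          + 2*x^2*(p-1)*(p*(x^2+a*y^2)+(x^2+y^2)) + 2*x^2*(x^2+y^2)*(p+1)))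
        *(-(8*p*x*y*((p+a)*x^4 + (1+p)*(1+a)*x^2*y^2 + (1+a*p)*y^4)))
        + (8*p*x*y*((p+a)*x^4 + (1+p)*(1+a)*x^2*y^2 + (1+a*p)*y^4))
          *(2*(2*(x^2+y^2)*((x^2+y^2)*(p*(x^2+a*y^2)+(x^2+y^2))
          + 2*x^2*(p-1)*(p*(x^2+a*y^2)+(x^2+y^2)) + 2*x^2*(x^2+y^2)*(p+1))))) = 0 := by
    ring
  rw [hz] at hinst
  set A := 2*(x^2+y^2)*((x^2+y^2)*(p*(x^2+a*y^2)+(x^2+y^2))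
      + 2*x^2*(p-1)*(p*(x^2+a*y^2)+(x^2+y^2)) + 2*x^2*(x^2+y^2)*(p+1)) with hAdef
  set g := (a*(p+1)*(2*p+1)*(1+a*p))*(x^2+y^2)^2
        + (p*(2*p+1)*(-1+2*a*(p+2)-a^2*(2*p+3)))*((x^2+y^2)*x^2)
        + (p*(2*p+1)*(p+2)*(1-a)^2)*x^4 with hgdef
  set u := x^2+y^2 with hudef
  exact quad_wit hKA hu hG hinst

/-- For `r ≥ 1` and `a > 0`, the binary form `(x² + y²)^r (x² + a y²)` is convex on `ℝ²`
iff `a + 1/a ≤ 8r + 18 + 8/r`. -/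
theorem convexOn_pow_mul_iff (r : ℕ) (hr : 1 ≤ r) (a : ℝ) (ha : 0 < a) :
    ConvexOn ℝ Set.univ
        (fun v : ℝ × ℝ => (v.1 ^ 2 + v.2 ^ 2) ^ r * (v.1 ^ 2 + a * v.2 ^ 2)) ↔
      a + 1 / a ≤ 8 * r + 18 + 8 / (r : ℝ) := by
  have hp : (1:ℝ) ≤ (r:ℝ) := by exact_mod_cast hr
  have hp0 : (0:ℝ) < (r:ℝ) := by linarith
  have e1 : (r:ℝ)*a*(a+1/a) = (r:ℝ)*a^2 + r := by field_simp
  have e2 : (r:ℝ)*a*(8*(r:ℝ)+18+8/(r:ℝ)) = 8*(r:ℝ)^2*a + 18*(r:ℝ)*a + 8*a := by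
    field_simp
  constructor
  · intro hconv
    by_contra hgt
    push_neg at hgt
    have hlt : (8*(r:ℝ)^2+18*(r:ℝ)+8)*a < (r:ℝ)*(a^2+1) := by
      have h := mul_lt_mul_of_pos_left hgt (by positivity : (0:ℝ) < (r:ℝ)*a)
      rw [e1, e2] at h
      linarith
    have ha1 : a ≠ 1 := by
      rintro rfl
      nlinarith [hp0, hp]
    have h1a : (0:ℝ) < (1-a)^2 := by
      have hne : 1 - a ≠ 0 := fun h => ha1 (by linarith)
      positivity
    have hNpos : 0 < (2*(r:ℝ)+3)*a^2 - 2*((r:ℝ)+2)*a + 1 := by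
      rcases lt_or_gt_of_ne ha1 with hlt1 | hgt1
      · have hsmall : (2*(r:ℝ)+3)*a < 1 := by
          by_contra hge2
          push_neg at hge2
          nlinarith [mul_pos hp0 ha, mul_pos (mul_pos hp0 hp0) ha]
        nlinarith
      · nlinarith [hp0]
    have hden : (0:ℝ) < 2*((r:ℝ)+2)*(1-a)^2 := by nlinarith
    have hs0 : 0 < ((2*(r:ℝ)+3)*a^2 - 2*((r:ℝ)+2)*a + 1) / (2*((r:ℝ)+2)*(1-a)^2) :=
      div_pos hNpos hden
    have hs1 : ((2*(r:ℝ)+3)*a^2 - 2*((r:ℝ)+2)*a + 1) / (2*((r:ℝ)+2)*(1-a)^2) < 1 := by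
      rw [div_lt_one hden]
      nlinarith [sq_nonneg ((2*(r:ℝ)+1)*a - ((r:ℝ)+2)), hp]
    set s : ℝ := ((2*(r:ℝ)+3)*a^2 - 2*((r:ℝ)+2)*a + 1) / (2*((r:ℝ)+2)*(1-a)^2) with hsdef
    set x0 := Real.sqrt s with hx0def
    set y0 := Real.sqrt (1-s) with hy0def
    have hx2 : x0^2 = s := Real.sq_sqrt hs0.le
    have hy2 : y0^2 = 1-s := Real.sq_sqrt (by linarith)
    have hU1 : x0^2+y0^2 = 1 := by rw [hx2, hy2]; ring
    have hu : (0:ℝ) < x0^2+y0^2 := by rw [hU1]; norm_num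
    have hc2 : 0 < (r:ℝ)*(2*(r:ℝ)+1)*((r:ℝ)+2)*(1-a)^2 :=
      mul_pos (by positivity) h1a
    have hEneg : 4*(a*((r:ℝ)+1)*(2*(r:ℝ)+1)*(1+a*(r:ℝ)))*((r:ℝ)*(2*(r:ℝ)+1)*((r:ℝ)+2)*(1-a)^2)
        - ((r:ℝ)*(2*(r:ℝ)+1)*(-1+2*a*((r:ℝ)+2)-a^2*(2*(r:ℝ)+3)))^2 < 0 := by
      have idE : (r:ℝ)*(4*(a*((r:ℝ)+1)*(2*(r:ℝ)+1)*(1+a*(r:ℝ)))*((r:ℝ)*(2*(r:ℝ)+1)*((r:ℝ)+2)*(1-a)^2)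
          - ((r:ℝ)*(2*(r:ℝ)+1)*(-1+2*a*((r:ℝ)+2)-a^2*(2*(r:ℝ)+3)))^2)
          = (r:ℝ)^2*(2*(r:ℝ)+1)^2*(a-1)^2*((8*(r:ℝ)^2+18*(r:ℝ)+8)*a - (r:ℝ)*(a^2+1)) := by
        ring
      have hfac : 0 < (r:ℝ)^2*(2*(r:ℝ)+1)^2*(a-1)^2 := by
        have h1a' : (0:ℝ) < (a-1)^2 := by nlinarith [h1a]
        have : (0:ℝ) < (r:ℝ)^2*(2*(r:ℝ)+1)^2 := by positivity
        exact mul_pos this h1a'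
      have hrhsneg : (r:ℝ)^2*(2*(r:ℝ)+1)^2*(a-1)^2*((8*(r:ℝ)^2+18*(r:ℝ)+8)*a - (r:ℝ)*(a^2+1)) < 0 :=
        mul_neg_of_pos_of_neg hfac (by linarith)
      rw [← idE] at hrhsneg
      by_contra hge3
      push_neg at hge3
      nlinarith [mul_nonneg hp0.le hge3]
    have hGneg : (a*((r:ℝ)+1)*(2*(r:ℝ)+1)*(1+a*(r:ℝ)))*(x0^2+y0^2)^2
        + ((r:ℝ)*(2*(r:ℝ)+1)*(-1+2*a*((r:ℝ)+2)-a^2*(2*(r:ℝ)+3)))*((x0^2+y0^2)*x0^2)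
        + ((r:ℝ)*(2*(r:ℝ)+1)*((r:ℝ)+2)*(1-a)^2)*x0^4 < 0 := by
      have hx4 : x0^4 = s^2 := by rw [show x0^4 = (x0^2)^2 by ring, hx2]
      rw [hU1, hx2, hx4]
      have hq : 4*((r:ℝ)*(2*(r:ℝ)+1)*((r:ℝ)+2)*(1-a)^2)
          *((a*((r:ℝ)+1)*(2*(r:ℝ)+1)*(1+a*(r:ℝ)))*(1:ℝ)^2
            + ((r:ℝ)*(2*(r:ℝ)+1)*(-1+2*a*((r:ℝ)+2)-a^2*(2*(r:ℝ)+3)))*(1*s)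
            + ((r:ℝ)*(2*(r:ℝ)+1)*((r:ℝ)+2)*(1-a)^2)*s^2)
          = 4*(a*((r:ℝ)+1)*(2*(r:ℝ)+1)*(1+a*(r:ℝ)))*((r:ℝ)*(2*(r:ℝ)+1)*((r:ℝ)+2)*(1-a)^2)
            - ((r:ℝ)*(2*(r:ℝ)+1)*(-1+2*a*((r:ℝ)+2)-a^2*(2*(r:ℝ)+3)))^2 := by
        rw [hsdef]
        field_simp
        ring
      by_contra hge4
      push_neg at hge4
      nlinarith [mul_nonneg hc2.le hge4]
    obtain ⟨q1, q2, hKneg⟩ := witness_neg (r:ℝ) a x0 y0 hp ha hu hGneg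
    have hline : ConvexOn ℝ Set.univ (fun t:ℝ =>
        ((x0+t*q1)^2+(y0+t*q2)^2)^r * ((x0+t*q1)^2+a*(y0+t*q2)^2)) := by
      have hcomp := hconv.comp_affineMap (AffineMap.lineMap ((x0,y0):ℝ×ℝ) (((x0,y0):ℝ×ℝ)+(q1,q2)))
      simp only [Set.preimage_univ] at hcomp
      convert hcomp using 1
      all_goals (try with_reducible_and_instances rfl)
      funext t
      simp only [Function.comp_apply, AffineMap.lineMap_apply, vsub_eq_sub, vadd_eq_add,
        Prod.mk_sub_mk, Prod.mk_add_mk, add_sub_cancel_left, Prod.smul_mk, smul_eq_mul]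
      ring
    have h0 := second_deriv_nonneg_of_convexOn hline
      (fun t => hasDeriv_g r a x0 y0 q1 q2 t) (fun t => hasDeriv_g' r hr a x0 y0 q1 q2 t) 0
    simp only [zero_mul, add_zero] at h0
    have hkey2 := key_id r hr a x0 y0 q1 q2
    have h2b : ((x0^2+y0^2):ℝ)^(r-1) = 1 := by rw [hU1]; exact one_pow _
    have h4 := mul_nonneg (by positivity : (0:ℝ) ≤ (x0^2+y0^2)^2) h0
    rw [hkey2] at h4
    rw [h2b, one_mul] at h4
    linarith [h4, hKneg]

  · intro hb
    have hmul : (r:ℝ)*(a^2+1) ≤ (8*(r:ℝ)^2+18*(r:ℝ)+8)*a := by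
      have h := mul_le_mul_of_nonneg_left hb (by positivity : (0:ℝ) ≤ (r:ℝ)*a)
      rw [e1, e2] at h
      linarith
    have hE : 0 ≤ 4*(a*((r:ℝ)+1)*(2*(r:ℝ)+1)*(1+a*(r:ℝ)))*((r:ℝ)*(2*(r:ℝ)+1)*((r:ℝ)+2)*(1-a)^2)
        - ((r:ℝ)*(2*(r:ℝ)+1)*(-1+2*a*((r:ℝ)+2)-a^2*(2*(r:ℝ)+3)))^2 := by
      have idE : (r:ℝ)*(4*(a*((r:ℝ)+1)*(2*(r:ℝ)+1)*(1+a*(r:ℝ)))*((r:ℝ)*(2*(r:ℝ)+1)*((r:ℝ)+2)*(1-a)^2)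
          - ((r:ℝ)*(2*(r:ℝ)+1)*(-1+2*a*((r:ℝ)+2)-a^2*(2*(r:ℝ)+3)))^2)
          = (r:ℝ)^2*(2*(r:ℝ)+1)^2*(a-1)^2*((8*(r:ℝ)^2+18*(r:ℝ)+8)*a - (r:ℝ)*(a^2+1)) := by
        ring
      have hrhs : 0 ≤ (r:ℝ)^2*(2*(r:ℝ)+1)^2*(a-1)^2*((8*(r:ℝ)^2+18*(r:ℝ)+8)*a - (r:ℝ)*(a^2+1)) :=
        mul_nonneg (by positivity) (by linarith)
      rw [← idE] at hrhs
      exact (mul_nonneg_iff_of_pos_left hp0).mp hrhs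
    refine ⟨convex_univ, ?_⟩
    intro P _ Q _ α β hα hβ2 hab
    have hg : ConvexOn ℝ Set.univ (fun t : ℝ =>
        ((P.1+t*(Q.1-P.1))^2+(P.2+t*(Q.2-P.2))^2)^r * ((P.1+t*(Q.1-P.1))^2+a*(P.2+t*(Q.2-P.2))^2)) := by
      refine convexOn_of_hasDerivWithinAt2_nonneg
        (f' := fun t => (r:ℝ)*((P.1+t*(Q.1-P.1))^2+(P.2+t*(Q.2-P.2))^2)^(r-1)*(2*((P.1+t*(Q.1-P.1))*(Q.1-P.1)+(P.2+t*(Q.2-P.2))*(Q.2-P.2)))*((P.1+t*(Q.1-P.1))^2+a*(P.2+t*(Q.2-P.2))^2)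
          + ((P.1+t*(Q.1-P.1))^2+(P.2+t*(Q.2-P.2))^2)^r*(2*((P.1+t*(Q.1-P.1))*(Q.1-P.1)+a*((P.2+t*(Q.2-P.2))*(Q.2-P.2)))))
        (f'' := fun t => (r:ℝ)*((r-1 : ℕ):ℝ)*((P.1+t*(Q.1-P.1))^2+(P.2+t*(Q.2-P.2))^2)^(r-2)*(2*((P.1+t*(Q.1-P.1))*(Q.1-P.1)+(P.2+t*(Q.2-P.2))*(Q.2-P.2)))^2*((P.1+t*(Q.1-P.1))^2+a*(P.2+t*(Q.2-P.2))^2)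
          + (r:ℝ)*((P.1+t*(Q.1-P.1))^2+(P.2+t*(Q.2-P.2))^2)^(r-1)*(2*((Q.1-P.1)^2+(Q.2-P.2)^2))*((P.1+t*(Q.1-P.1))^2+a*(P.2+t*(Q.2-P.2))^2)
          + 2*((r:ℝ)*((P.1+t*(Q.1-P.1))^2+(P.2+t*(Q.2-P.2))^2)^(r-1)*(2*((P.1+t*(Q.1-P.1))*(Q.1-P.1)+(P.2+t*(Q.2-P.2))*(Q.2-P.2)))*(2*((P.1+t*(Q.1-P.1))*(Q.1-P.1)+a*((P.2+t*(Q.2-P.2))*(Q.2-P.2)))))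
          + ((P.1+t*(Q.1-P.1))^2+(P.2+t*(Q.2-P.2))^2)^r*(2*((Q.1-P.1)^2+a*(Q.2-P.2)^2)))
        convex_univ ?_ ?_ ?_ ?_
      · exact (by fun_prop : Continuous fun t : ℝ =>
          ((P.1+t*(Q.1-P.1))^2+(P.2+t*(Q.2-P.2))^2)^r * ((P.1+t*(Q.1-P.1))^2+a*(P.2+t*(Q.2-P.2))^2)).continuousOn
      · intro s _
        exact (hasDeriv_g r a P.1 P.2 (Q.1-P.1) (Q.2-P.2) s).hasDerivWithinAt
      · intro s _
        exact (hasDeriv_g' r hr a P.1 P.2 (Q.1-P.1) (Q.2-P.2) s).hasDerivWithinAt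
      · intro s _
        exact gpp_nonneg r hr a ha hE (P.1+s*(Q.1-P.1)) (P.2+s*(Q.2-P.2)) (Q.1-P.1) (Q.2-P.2)
    have h2 := hg.2 (Set.mem_univ (0:ℝ)) (Set.mem_univ (1:ℝ)) hα hβ2 hab
    have h01 : α • (0:ℝ) + β • (1:ℝ) = β := by simp
    rw [h01] at h2
    simp only [smul_eq_mul] at h2 ⊢
    have hα' : α = 1 - β := by linarith
    subst hα'
    have hv0 : ((P.1+(0:ℝ)*(Q.1-P.1))^2+(P.2+(0:ℝ)*(Q.2-P.2))^2)^r * ((P.1+(0:ℝ)*(Q.1-P.1))^2+a*(P.2+(0:ℝ)*(Q.2-P.2))^2)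
        = (P.1^2+P.2^2)^r*(P.1^2+a*P.2^2) := by norm_num
    have hv1 : ((P.1+(1:ℝ)*(Q.1-P.1))^2+(P.2+(1:ℝ)*(Q.2-P.2))^2)^r * ((P.1+(1:ℝ)*(Q.1-P.1))^2+a*(P.2+(1:ℝ)*(Q.2-P.2))^2)
        = (Q.1^2+Q.2^2)^r*(Q.1^2+a*Q.2^2) := by norm_num
    have hvb : ((P.1+β*(Q.1-P.1))^2+(P.2+β*(Q.2-P.2))^2)^r * ((P.1+β*(Q.1-P.1))^2+a*(P.2+β*(Q.2-P.2))^2)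
        = ((((1-β) • P + β • Q : ℝ×ℝ).1)^2+((((1-β) • P + β • Q : ℝ×ℝ).2))^2)^r
          * ((((1-β) • P + β • Q : ℝ×ℝ).1)^2+a*((((1-β) • P + β • Q : ℝ×ℝ).2))^2) := by
      have ea : ((1-β) • P + β • Q : ℝ×ℝ).1 = P.1+β*(Q.1-P.1) := by
        simp [Prod.fst_add]; ring
      have eb : ((1-β) • P + β • Q : ℝ×ℝ).2 = P.2+β*(Q.2-P.2) := by
        simp [Prod.snd_add]; ring
      rw [ea, eb]
    rw [hv0, hv1, hvb] at h2
    exact h2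
end
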